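/- Let k be a positive integer and set C(k) = N₄(k) − 12·N₁,₁,₂(k) − 4·N₃(k) + 18·N₂(k) + 24·N₁,₂(k) + 32·N₁,₃(k) + 12·N₂(k/2), where N₂(k/2) is interpreted as 0 when k is odd. If k = m² for some odd positive integer m, then 384·L₄(k) = C(k) − 120; if k = 2m² for some positive integer m, then 384·L₄(k) = C(k) − 72; if k = 3m² for some positive integer m, then 384·L₄(k) = C(k) − 64; if k = 4m² for some positive integer m, then 384·L₄(k) = C(k) − 216. -/

import Mathlib

noncomputable def N4 (k : ℕ) : ℕ := {q : ℤ × ℤ × ℤ × ℤ | q.1 ^ 2 + q.2.1 ^ 2 + q.2.2.1 ^ 2 + q.2.2.2 ^ 2 = (k : ℤ)}.ncard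

noncomputable def L4 (k : ℕ) : ℕ := {q : ℕ × ℕ × ℕ × ℕ | 0 < q.1 ∧ q.1 < q.2.1 ∧ q.2.1 < q.2.2.1 ∧ q.2.2.1 < q.2.2.2 ∧ q.1 ^ 2 + q.2.1 ^ 2 + q.2.2.1 ^ 2 + q.2.2.2 ^ 2 = k}.ncard

noncomputable def N112 (k : ℕ) : ℕ := {t : ℤ × ℤ × ℤ | t.1 ^ 2 + t.2.1 ^ 2 + 2 * t.2.2 ^ 2 = (k : ℤ)}.ncard

noncomputable def N3 (k : ℕ) : ℕ := {t : ℤ × ℤ × ℤ | t.1 ^ 2 + t.2.1 ^ 2 + t.2.2 ^ 2 = (k : ℤ)}.ncard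

noncomputable def N2 (k : ℕ) : ℕ := {p : ℤ × ℤ | p.1 ^ 2 + p.2 ^ 2 = (k : ℤ)}.ncard

noncomputable def N12 (k : ℕ) : ℕ := {p : ℤ × ℤ | p.1 ^ 2 + 2 * p.2 ^ 2 = (k : ℤ)}.ncard

noncomputable def N13 (k : ℕ) : ℕ := {p : ℤ × ℤ | p.1 ^ 2 + 3 * p.2 ^ 2 = (k : ℤ)}.ncard

noncomputable def N2half (k : ℕ) : ℕ := if k % 2 = 0 then N2 (k / 2) else 0

noncomputable def C (k : ℕ) : ℤ := N4 k - 12 * N112 k - 4 * N3 k + 18 * N2 k + 24 * N12 k + 32 * N13 k + 12 * N2half k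

set_option maxRecDepth 100000

open Finset

-- number theory helper
lemma nt {p : ℕ} (hp : p.Prime) (c a b : ℕ) (hc : ¬ p ∣ c) (hb : 0 < b) :
    p * a ^ 2 ≠ c * b ^ 2 := by
  intro h
  have hc0 : c ≠ 0 := by rintro rfl; exact hc (dvd_zero p)
  have ha : a ≠ 0 := by
    rintro rfl
    have : c * b ^ 2 = 0 := by omega
    rcases Nat.mul_eq_zero.mp this with h | h
    · exact hc0 h
    · exact hb.ne' (pow_eq_zero_iff (n := 2) (by norm_num) |>.mp h)
  have h1 := congrArg (fun n => n.factorization p) h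
  simp only [Nat.factorization_mul (hp.pos.ne') (pow_ne_zero 2 ha),
    Nat.factorization_mul hc0 (pow_ne_zero 2 hb.ne'), Nat.factorization_pow] at h1
  have h2 : p.factorization p = 1 := by simp [hp.factorization]
  have h3 : c.factorization p = 0 := Nat.factorization_eq_zero_of_not_dvd hc
  simp only [Finsupp.add_apply, Finsupp.smul_apply, h2, h3, smul_eq_mul] at h1
  omega

abbrev V := Fin 4 → ℤ

def Qsum (q : V) : ℤ := ∑ i, q i ^ 2

lemma Qsum_expand (q : V) : Qsum q = q 0 ^ 2 + q 1 ^ 2 + q 2 ^ 2 + q 3 ^ 2 := by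
  simp [Qsum, Fin.sum_univ_four]

lemma sq_le_bound {x : ℤ} {k : ℕ} (h : x ^ 2 ≤ (k : ℤ)) : -(k : ℤ) ≤ x ∧ x ≤ k := by
  constructor <;> nlinarith [sq_nonneg x, sq_nonneg (x + 1), sq_nonneg (x - 1), Int.natCast_nonneg k]

noncomputable def SA (k : ℕ) : Finset V :=
  (Fintype.piFinset fun _ => Finset.Icc (-(k : ℤ)) (k : ℤ)).filter fun q => Qsum q = (k : ℤ)

lemma mem_SA {k : ℕ} {q : V} : q ∈ SA k ↔ Qsum q = (k : ℤ) := by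
  constructor
  · exact fun h => (Finset.mem_filter.mp h).2
  · intro h
    refine Finset.mem_filter.mpr ⟨Fintype.mem_piFinset.mpr fun i => ?_, h⟩
    have h1 : q i ^ 2 ≤ (k : ℤ) := by
      rw [← h]
      exact Finset.single_le_sum (f := fun j => q j ^ 2) (fun j _ => sq_nonneg _) (Finset.mem_univ i)
    exact Finset.mem_Icc.mpr (sq_le_bound h1)

-- the group of signed permutations, as a Finset
def permFin : Finset (Fin 4 → Fin 4) := Finset.univ.filter fun f => Finset.image f Finset.univ = Finset.univ

lemma mem_permFin {f : Fin 4 → Fin 4} : f ∈ permFin ↔ Function.Bijective f := by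
  constructor
  · intro h
    have h2 := (Finset.mem_filter.mp h).2
    have hsurj : Function.Surjective f := by
      intro b
      have : b ∈ Finset.image f Finset.univ := by rw [h2]; exact Finset.mem_univ b
      obtain ⟨a, _, ha⟩ := Finset.mem_image.mp this
      exact ⟨a, ha⟩
    exact ⟨Finite.injective_iff_surjective.mpr hsurj, hsurj⟩
  · intro hb
    refine Finset.mem_filter.mpr ⟨Finset.mem_univ f, ?_⟩
    ext b
    simp only [Finset.mem_image, Finset.mem_univ, iff_true, true_and]
    exact hb.2 b

abbrev W := (Fin 4 → Bool) × (Fin 4 → Fin 4)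

def Wfin : Finset W := Finset.univ ×ˢ permFin

lemma mem_Wfin {g : W} : g ∈ Wfin ↔ Function.Bijective g.2 := by
  simp [Wfin, Finset.mem_product, mem_permFin]

lemma card_Wfin : Wfin.card = 384 := by decide

def act (g : W) (q : V) : V := fun i => (if g.1 i then -1 else 1) * q (g.2 i)

def wmul (g h : W) : W := (fun i => xor (g.1 i) (h.1 (g.2 i)), h.2 ∘ g.2)

lemma sign_xor (a b : Bool) : (if xor a b then (-1 : ℤ) else 1) = (if a then (-1:ℤ) else 1) * (if b then (-1:ℤ) else 1) := by
  cases a <;> cases b <;> norm_num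

lemma sign_cancel (b : Bool) (x : ℤ) : (if b then (-1:ℤ) else 1) * ((if b then (-1:ℤ) else 1) * x) = x := by
  cases b <;> simp

lemma act_wmul (g h : W) (q : V) : act (wmul g h) q = act g (act h q) := by
  funext i
  simp only [act, wmul, Function.comp_apply]
  show (if xor (g.1 i) (h.1 (g.2 i)) then (-1:ℤ) else 1) * q (h.2 (g.2 i)) = _
  rw [sign_xor]
  ring

lemma wmul_mem {g h : W} (hg : g ∈ Wfin) (hh : h ∈ Wfin) : wmul g h ∈ Wfin := by
  rw [mem_Wfin] at *
  show Function.Bijective (h.2 ∘ g.2)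
  exact Function.Bijective.comp hh hg

noncomputable def winv (g : W) (hb : Function.Bijective g.2) : W :=
  (fun i => g.1 ((Equiv.ofBijective g.2 hb).symm i), fun i => (Equiv.ofBijective g.2 hb).symm i)

lemma winv_mem {g : W} (hb : Function.Bijective g.2) : winv g hb ∈ Wfin := by
  rw [mem_Wfin]
  exact (Equiv.ofBijective g.2 hb).symm.bijective

lemma act_winv_left {g : W} (hb : Function.Bijective g.2) (q : V) :
    act (winv g hb) (act g q) = q := by
  funext i
  have h1 : g.2 ((Equiv.ofBijective g.2 hb).symm i) = i := (Equiv.ofBijective g.2 hb).apply_symm_apply i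
  simp only [act, winv]
  simp only [h1]
  exact sign_cancel _ _

lemma act_winv_right {g : W} (hb : Function.Bijective g.2) (q : V) :
    act g (act (winv g hb) q) = q := by
  funext i
  have h1 : (Equiv.ofBijective g.2 hb).symm (g.2 i) = i := (Equiv.ofBijective g.2 hb).symm_apply_apply i
  simp only [act, winv]
  simp only [h1]
  exact sign_cancel _ _

lemma sign_sq (b : Bool) (x : ℤ) : ((if b then (-1 : ℤ) else 1) * x) ^ 2 = x ^ 2 := by
  cases b <;> simp <;> ring

lemma Qsum_act {g : W} (hb : Function.Bijective g.2) (q : V) : Qsum (act g q) = Qsum q := by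
  unfold Qsum
  calc (∑ i, act g q i ^ 2) = ∑ i, q (g.2 i) ^ 2 :=
        Finset.sum_congr rfl fun i _ => sign_sq _ _
    _ = ∑ i, q i ^ 2 := Function.Bijective.sum_comp hb (fun i => q i ^ 2)

def cnt (P : V → Prop) [DecidablePred P] (q : V) : ℕ := (Wfin.filter fun g => P (act g q)).card

lemma star (k : ℕ) (P : V → Prop) [DecidablePred P] :
    ∑ q ∈ SA k, cnt P q = ((SA k).filter P).card * 384 := by
  have h1 : ∀ q, cnt P q = ∑ g ∈ Wfin, if P (act g q) then 1 else 0 := fun q =>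
    Finset.card_filter _ _
  calc ∑ q ∈ SA k, cnt P q = ∑ q ∈ SA k, ∑ g ∈ Wfin, if P (act g q) then 1 else 0 :=
        Finset.sum_congr rfl fun q _ => h1 q
    _ = ∑ g ∈ Wfin, ∑ q ∈ SA k, if P (act g q) then 1 else 0 := Finset.sum_comm
    _ = ∑ g ∈ Wfin, ((SA k).filter P).card := by
        refine Finset.sum_congr rfl fun g hg => ?_
        have hb : Function.Bijective g.2 := mem_Wfin.mp hg
        rw [← Finset.card_filter]
        refine Finset.card_bij (fun q _ => act g q) ?_ ?_ ?_
        · intro q hq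
          rw [Finset.mem_filter] at hq ⊢
          exact ⟨mem_SA.mpr (by rw [Qsum_act hb]; exact mem_SA.mp hq.1), hq.2⟩
        · intro a ha b hb' hab
          have := congrArg (act (winv g hb)) hab
          rwa [act_winv_left, act_winv_left] at this
        · intro b hbm
          rw [Finset.mem_filter] at hbm
          refine ⟨act (winv g hb) b, Finset.mem_filter.mpr ⟨?_, ?_⟩, act_winv_right hb b⟩
          · exact mem_SA.mpr (by rw [Qsum_act (mem_Wfin.mp (winv_mem hb))]; exact mem_SA.mp hbm.1)
          · rw [act_winv_right hb b]; exact hbm.2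
    _ = ((SA k).filter P).card * 384 := by rw [Finset.sum_const, card_Wfin, smul_eq_mul, Nat.mul_comm]


lemma wmul_right_inj {h : W} (hb : Function.Bijective h.2) :
    Function.Injective (fun g => wmul g h) := by
  intro g g' he
  simp only [wmul, Prod.mk.injEq] at he
  have h2 : g.2 = g'.2 := by
    funext i
    exact hb.1 (congrFun he.2 i)
  refine Prod.ext ?_ h2
  funext i
  have := congrFun he.1 i
  rw [h2] at this
  rcases Bool.eq_false_or_eq_true (h.1 (g'.2 i)) with hx | hx <;>
    rcases Bool.eq_false_or_eq_true (g.1 i) with hy | hy <;>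
    rcases Bool.eq_false_or_eq_true (g'.1 i) with hz | hz <;>
    simp_all

lemma wmul_winv_cancel {h : W} (hb : Function.Bijective h.2) (g' : W) :
    wmul (wmul g' (winv h hb)) h = g' := by
  have happ : ∀ x, h.2 ((Equiv.ofBijective h.2 hb).symm x) = x :=
    (Equiv.ofBijective h.2 hb).apply_symm_apply
  refine Prod.ext ?_ ?_
  · funext i
    simp only [wmul, winv, Function.comp_apply, happ]
    rw [Bool.xor_assoc]
    simp
  · funext i
    simp only [wmul, winv, Function.comp_apply]
    exact happ _

lemma cnt_act (P : V → Prop) [DecidablePred P] {h : W} (hh : h ∈ Wfin) (q : V) :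
    cnt P (act h q) = cnt P q := by
  have hb : Function.Bijective h.2 := mem_Wfin.mp hh
  unfold cnt
  refine Finset.card_bij (fun g _ => wmul g h) ?_ ?_ ?_
  · intro g hg
    rw [Finset.mem_filter] at hg ⊢
    exact ⟨wmul_mem hg.1 hh, by rw [act_wmul]; exact hg.2⟩
  · intro a _ b _ hab
    exact wmul_right_inj hb hab
  · intro g' hg'
    rw [Finset.mem_filter] at hg'
    refine ⟨wmul g' (winv h hb), Finset.mem_filter.mpr ⟨wmul_mem hg'.1 (winv_mem hb), ?_⟩, ?_⟩
    · rw [act_wmul, act_winv_left hb]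
      exact hg'.2
    · exact wmul_winv_cancel hb g'


-- pattern predicates
def zc (q : V) : ℕ := (Finset.univ.filter fun i => q i = 0).card
def Dp (q : V) : Prop := zc q = 0 ∧ ∀ j k, j ≠ k → |q j| ≠ |q k|
def P5 (q : V) : Prop := zc q = 0 ∧ ∀ j k : Fin 4, |q j| = |q k|
def P8 (q : V) : Prop := zc q = 1 ∧ ∀ j k, q j ≠ 0 → q k ≠ 0 → |q j| = |q k|
def P10 (q : V) : Prop := zc q = 2 ∧ ∀ j k, q j ≠ 0 → q k ≠ 0 → |q j| = |q k|
def P11 (q : V) : Prop := zc q = 3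
instance : DecidablePred Dp := fun q => by unfold Dp; infer_instance
instance : DecidablePred P5 := fun q => by unfold P5; infer_instance
instance : DecidablePred P8 := fun q => by unfold P8; infer_instance
instance : DecidablePred P10 := fun q => by unfold P10; infer_instance
instance : DecidablePred P11 := fun q => by unfold P11; infer_instance

lemma abs_act (g : W) (q : V) (i : Fin 4) : |act g q i| = |q (g.2 i)| := by
  unfold act
  cases hg : g.1 i <;> simp

lemma zero_act (g : W) (q : V) (i : Fin 4) : act g q i = 0 ↔ q (g.2 i) = 0 := by
  unfold act
  cases hg : g.1 i <;> simp

lemma zc_act {g : W} (hb : Function.Bijective g.2) (q : V) : zc (act g q) = zc q := by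
  unfold zc
  refine Finset.card_bij (fun i _ => g.2 i) ?_ ?_ ?_
  · intro i hi
    simp only [Finset.mem_filter, Finset.mem_univ, true_and] at hi ⊢
    exact (zero_act g q i).mp hi
  · intro a _ b _ hab
    exact hb.1 hab
  · intro j hj
    simp only [Finset.mem_filter, Finset.mem_univ, true_and] at hj ⊢
    obtain ⟨i, rfl⟩ := hb.2 j
    exact ⟨i, (zero_act g q i).mpr hj, rfl⟩

section actinv
variable {g : W} (q : V)

lemma eqabs_act (hb : Function.Bijective g.2) : (∀ j k, q j ≠ 0 → q k ≠ 0 → |q j| = |q k|) ↔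
    (∀ j k, act g q j ≠ 0 → act g q k ≠ 0 → |act g q j| = |act g q k|) := by
  constructor
  · intro H j k hj hk
    rw [abs_act, abs_act]
    exact H _ _ (fun h => hj ((zero_act g q j).mpr h)) (fun h => hk ((zero_act g q k).mpr h))
  · intro H j k hj hk
    obtain ⟨j', rfl⟩ := hb.2 j
    obtain ⟨k', rfl⟩ := hb.2 k
    rw [← abs_act, ← abs_act]
    exact H j' k' (fun h => hj ((zero_act g q j').mp h)) (fun h => hk ((zero_act g q k').mp h))

lemma Dp_act (hb : Function.Bijective g.2) : Dp (act g q) ↔ Dp q := by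
  unfold Dp
  rw [zc_act hb]
  refine and_congr_right fun _ => ⟨fun H j k hjk => ?_, fun H j k hjk => ?_⟩
  · obtain ⟨j', rfl⟩ := hb.2 j
    obtain ⟨k', rfl⟩ := hb.2 k
    rw [← abs_act, ← abs_act]
    exact H j' k' (fun h => hjk (by rw [h]))
  · rw [abs_act, abs_act]
    exact H _ _ (fun h => hjk (hb.1 h))

lemma P5_act (hb : Function.Bijective g.2) : P5 (act g q) ↔ P5 q := by
  unfold P5
  rw [zc_act hb]
  refine and_congr_right fun _ => ⟨fun H j k => ?_, fun H j k => ?_⟩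
  · obtain ⟨j', rfl⟩ := hb.2 j
    obtain ⟨k', rfl⟩ := hb.2 k
    rw [← abs_act, ← abs_act]
    exact H j' k'
  · rw [abs_act, abs_act]
    exact H _ _

lemma P8_act (hb : Function.Bijective g.2) : P8 (act g q) ↔ P8 q := by
  unfold P8
  rw [zc_act hb]
  exact and_congr_right fun _ => (eqabs_act q hb).symm

lemma P10_act (hb : Function.Bijective g.2) : P10 (act g q) ↔ P10 q := by
  unfold P10
  rw [zc_act hb]
  exact and_congr_right fun _ => (eqabs_act q hb).symm

lemma P11_act (hb : Function.Bijective g.2) : P11 (act g q) ↔ P11 q := by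
  unfold P11
  rw [zc_act hb]

end actinv


-- rank machinery
def rset (p : V) : Finset ℤ := Finset.univ.image p
def r0 (p : V) (x : ℤ) : ℕ := ((rset p).filter fun v => 0 < v ∧ v ≤ x).card
def rnk (p : V) (x : ℤ) : ℤ := if 0 ≤ x then (r0 p x : ℤ) else -(r0 p (-x) : ℤ)

def RelV (p : V) (x : ℤ) : Prop := ∃ i, x = p i ∨ x = -(p i)

lemma r0_nonpos (p : V) {x : ℤ} (hx : x ≤ 0) : r0 p x = 0 := by
  unfold r0
  rw [Finset.card_eq_zero, Finset.filter_eq_empty_iff]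
  intro v _
  omega

lemma rnk_of_nonneg (p : V) {x : ℤ} (hx : 0 ≤ x) : rnk p x = (r0 p x : ℤ) := if_pos hx

lemma rnk_zero (p : V) : rnk p 0 = 0 := by
  rw [rnk_of_nonneg p le_rfl, r0_nonpos p le_rfl, Nat.cast_zero]

lemma rnk_neg (p : V) (x : ℤ) : rnk p (-x) = - rnk p x := by
  rcases lt_trichotomy x 0 with h | h | h
  · rw [rnk_of_nonneg p (by omega), rnk, if_neg (by omega)]
    ring
  · subst h; rw [neg_zero, rnk_zero]; ring
  · rw [rnk, if_neg (by omega), rnk_of_nonneg p (by omega), neg_neg]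

lemma r0_mono (p : V) {x y : ℤ} (hxy : x ≤ y) : r0 p x ≤ r0 p y := by
  apply Finset.card_le_card
  intro v hv
  rw [Finset.mem_filter] at hv ⊢
  exact ⟨hv.1, by omega⟩

lemma mem_rset (p : V) (j : Fin 4) : p j ∈ rset p := Finset.mem_image_of_mem p (Finset.mem_univ j)

lemma r0_lt (p : V) {x : ℤ} (hx : 0 ≤ x) {j : Fin 4} (hj : x < p j) : r0 p x < r0 p (p j) := by
  apply Finset.card_lt_card
  constructor
  · intro v hv
    rw [Finset.mem_filter] at hv ⊢
    exact ⟨hv.1, by omega⟩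
  · intro hsub
    have : p j ∈ (rset p).filter fun v => 0 < v ∧ v ≤ p j :=
      Finset.mem_filter.mpr ⟨mem_rset p j, by omega, le_rfl⟩
    have h2 := hsub this
    rw [Finset.mem_filter] at h2
    omega

lemma r0_pos (p : V) {j : Fin 4} (hj : 0 < p j) : 0 < r0 p (p j) := by
  apply Finset.card_pos.mpr
  exact ⟨p j, Finset.mem_filter.mpr ⟨mem_rset p j, hj, le_rfl⟩⟩

section relinj
variable {p : V} (hp : ∀ i, 0 ≤ p i)

lemma rnk_val_eq (hp : ∀ i, 0 ≤ p i) {i j : Fin 4} (h : rnk p (p i) = rnk p (p j)) : p i = p j := by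
  rcases lt_trichotomy (p i) (p j) with hlt | he | hlt
  · exfalso
    have := r0_lt p (hp i) hlt
    rw [rnk_of_nonneg p (hp i), rnk_of_nonneg p (hp j)] at h
    omega
  · exact he
  · exfalso
    have := r0_lt p (hp j) hlt
    rw [rnk_of_nonneg p (hp i), rnk_of_nonneg p (hp j)] at h
    omega

lemma rnk_val_zero_iff (hp : ∀ i, 0 ≤ p i) (i : Fin 4) : rnk p (p i) = 0 ↔ p i = 0 := by
  rw [rnk_of_nonneg p (hp i)]
  constructor
  · intro h
    by_contra hne
    have : 0 < p i := lt_of_le_of_ne (hp i) (Ne.symm hne)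
    have := r0_pos p this
    omega
  · intro h
    rw [h, r0_nonpos p le_rfl, Nat.cast_zero]

lemma rnk_zero_iff (hp : ∀ i, 0 ≤ p i) {x : ℤ} (hx : RelV p x) : rnk p x = 0 ↔ x = 0 := by
  obtain ⟨i, hi | hi⟩ := hx
  · subst hi; exact rnk_val_zero_iff hp i
  · subst hi
    rw [rnk_neg, neg_eq_zero, neg_eq_zero]
    exact rnk_val_zero_iff hp i

lemma rnk_inj (hp : ∀ i, 0 ≤ p i) {x y : ℤ} (hx : RelV p x) (hy : RelV p y)
    (h : rnk p x = rnk p y) : x = y := by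
  obtain ⟨i, hi | hi⟩ := hx <;> obtain ⟨j, hj | hj⟩ := hy <;> subst hi <;> subst hj
  · exact rnk_val_eq hp h
  · -- x = p i, y = -(p j): rnk x ≥ 0, rnk y ≤ 0
    rw [rnk_neg] at h
    have h1 : (0:ℤ) ≤ rnk p (p i) := by rw [rnk_of_nonneg p (hp i)]; positivity
    have h2 : (0:ℤ) ≤ rnk p (p j) := by rw [rnk_of_nonneg p (hp j)]; positivity
    have hz1 : rnk p (p i) = 0 := by omega
    have hz2 : rnk p (p j) = 0 := by omega
    rw [(rnk_val_zero_iff hp i).mp hz1, (rnk_val_zero_iff hp j).mp hz2, neg_zero]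
  · rw [rnk_neg] at h
    have h1 : (0:ℤ) ≤ rnk p (p i) := by rw [rnk_of_nonneg p (hp i)]; positivity
    have h2 : (0:ℤ) ≤ rnk p (p j) := by rw [rnk_of_nonneg p (hp j)]; positivity
    have hz1 : rnk p (p i) = 0 := by omega
    have hz2 : rnk p (p j) = 0 := by omega
    rw [(rnk_val_zero_iff hp i).mp hz1, (rnk_val_zero_iff hp j).mp hz2, neg_zero]
  · rw [rnk_neg, rnk_neg, neg_inj] at h
    rw [rnk_val_eq hp h]

lemma rnk_eq_iff (hp : ∀ i, 0 ≤ p i) {x y : ℤ} (hx : RelV p x) (hy : RelV p y) :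
    rnk p x = rnk p y ↔ x = y :=
  ⟨rnk_inj hp hx hy, fun h => by rw [h]⟩

lemma RelV_neg {x : ℤ} (hx : RelV p x) : RelV p (-x) := by
  obtain ⟨i, hi | hi⟩ := hx
  · exact ⟨i, Or.inr (by omega)⟩
  · exact ⟨i, Or.inl (by omega)⟩

lemma rnk_absiff (hp : ∀ i, 0 ≤ p i) {x y : ℤ} (hx : RelV p x) (hy : RelV p y) :
    |rnk p x| = |rnk p y| ↔ |x| = |y| := by
  rw [abs_eq_abs, abs_eq_abs]
  constructor
  · rintro (h | h)
    · exact Or.inl (rnk_inj hp hx hy h)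
    · rw [← rnk_neg] at h
      exact Or.inr (rnk_inj hp hx (RelV_neg hy) h)
  · rintro (h | h)
    · exact Or.inl (by rw [h])
    · exact Or.inr (by rw [h, rnk_neg])

end relinj

lemma act_rel (g : W) (p : V) (i : Fin 4) : RelV p (act g p i) := by
  unfold act
  cases hg : g.1 i
  · exact ⟨g.2 i, Or.inl (by simp)⟩
  · exact ⟨g.2 i, Or.inr (by simp)⟩

lemma act_rnk (g : W) (p : V) : act g (fun i => rnk p (p i)) = fun i => rnk p (act g p i) := by
  funext i
  unfold act
  cases hg : g.1 i
  · simp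
  · simp only [if_true]
    rw [show (-1 : ℤ) * rnk p (p (g.2 i)) = -(rnk p (p (g.2 i))) by ring,
      show (-1 : ℤ) * p (g.2 i) = -(p (g.2 i)) by ring, rnk_neg]


-- the six linear-condition predicates
def A112 (q : V) : Prop := q 2 = q 3
def A3 (q : V) : Prop := q 3 = 0
def A2 (q : V) : Prop := q 2 = 0 ∧ q 3 = 0
def A12 (q : V) : Prop := q 1 = q 2 ∧ q 3 = 0
def A13 (q : V) : Prop := q 1 = q 2 ∧ q 2 = q 3
def A2h (q : V) : Prop := q 0 = q 1 ∧ q 2 = q 3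
instance : DecidablePred A112 := fun q => by unfold A112; infer_instance
instance : DecidablePred A3 := fun q => by unfold A3; infer_instance
instance : DecidablePred A2 := fun q => by unfold A2; infer_instance
instance : DecidablePred A12 := fun q => by unfold A12; infer_instance
instance : DecidablePred A13 := fun q => by unfold A13; infer_instance
instance : DecidablePred A2h := fun q => by unfold A2h; infer_instance

def ind (P : Prop) [Decidable P] : ℤ := if P then 1 else 0

lemma ind_congr {P Q : Prop} [Decidable P] [Decidable Q] (h : P ↔ Q) : ind P = ind Q := by
  unfold ind
  exact if_congr h rfl rfl

def Eq1 (q : V) : Prop :=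
  (384 : ℤ) - 12 * cnt A112 q - 4 * cnt A3 q + 18 * cnt A2 q + 24 * cnt A12 q
    + 32 * cnt A13 q + 12 * cnt A2h q
  = 384 * ind (Dp q) + 2304 * ind (P5 q) + 768 * ind (P8 q) + 1152 * ind (P10 q)
    + 5760 * ind (P11 q)

instance : DecidablePred Eq1 := fun q => by unfold Eq1; infer_instance

lemma Eq1_act {h : W} (hh : h ∈ Wfin) (q : V) : Eq1 (act h q) ↔ Eq1 q := by
  have hb := mem_Wfin.mp hh
  unfold Eq1
  rw [cnt_act A112 hh, cnt_act A3 hh, cnt_act A2 hh, cnt_act A12 hh, cnt_act A13 hh,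
    cnt_act A2h hh, ind_congr (Dp_act q hb), ind_congr (P5_act q hb), ind_congr (P8_act q hb),
    ind_congr (P10_act q hb), ind_congr (P11_act q hb)]

lemma cnt_rnk_aux (P : V → Prop) [DecidablePred P] (p : V)
    (hP : ∀ x : V, (∀ i, RelV p (x i)) → (P (fun i => rnk p (x i)) ↔ P x)) :
    cnt P (fun i => rnk p (p i)) = cnt P p := by
  unfold cnt
  congr 1
  apply Finset.filter_congr
  intro g _
  rw [act_rnk]
  exact hP (act g p) (act_rel g p)

section rnktransfer
variable {p : V}

lemma relself (i : Fin 4) : RelV p (p i) := ⟨i, Or.inl rfl⟩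

lemma zc_rnk (hp : ∀ i, 0 ≤ p i) : zc (fun i => rnk p (p i)) = zc p := by
  unfold zc
  congr 1
  apply Finset.filter_congr
  intro i _
  exact rnk_val_zero_iff hp i

lemma Dp_rnk (hp : ∀ i, 0 ≤ p i) : Dp (fun i => rnk p (p i)) ↔ Dp p := by
  unfold Dp
  rw [zc_rnk hp]
  refine and_congr_right fun _ => forall_congr' fun j => forall_congr' fun k => imp_congr_right fun _ => ?_
  exact not_congr (rnk_absiff hp (relself j) (relself k))

lemma P5_rnk (hp : ∀ i, 0 ≤ p i) : P5 (fun i => rnk p (p i)) ↔ P5 p := by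
  unfold P5
  rw [zc_rnk hp]
  refine and_congr_right fun _ => forall_congr' fun j => forall_congr' fun k => ?_
  exact rnk_absiff hp (relself j) (relself k)

lemma eqabs_rnk (hp : ∀ i, 0 ≤ p i) :
    (∀ j k, rnk p (p j) ≠ 0 → rnk p (p k) ≠ 0 → |rnk p (p j)| = |rnk p (p k)|) ↔
    (∀ j k, p j ≠ 0 → p k ≠ 0 → |p j| = |p k|) :=
  forall_congr' fun j => forall_congr' fun k =>
    imp_congr (not_congr (rnk_val_zero_iff hp j))
      (imp_congr (not_congr (rnk_val_zero_iff hp k)) (rnk_absiff hp (relself j) (relself k)))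

lemma P8_rnk (hp : ∀ i, 0 ≤ p i) : P8 (fun i => rnk p (p i)) ↔ P8 p := by
  unfold P8
  rw [zc_rnk hp]
  exact and_congr_right fun _ => eqabs_rnk hp

lemma P10_rnk (hp : ∀ i, 0 ≤ p i) : P10 (fun i => rnk p (p i)) ↔ P10 p := by
  unfold P10
  rw [zc_rnk hp]
  exact and_congr_right fun _ => eqabs_rnk hp

lemma P11_rnk (hp : ∀ i, 0 ≤ p i) : P11 (fun i => rnk p (p i)) ↔ P11 p := by
  unfold P11
  rw [zc_rnk hp]

lemma Eq1_rnk (hp : ∀ i, 0 ≤ p i) : Eq1 (fun i => rnk p (p i)) ↔ Eq1 p := by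
  unfold Eq1
  rw [cnt_rnk_aux A112 p (fun x hx => rnk_eq_iff hp (hx 2) (hx 3)),
    cnt_rnk_aux A3 p (fun x hx => by
      unfold A3; rw [rnk_zero_iff hp (hx 3)]),
    cnt_rnk_aux A2 p (fun x hx => by
      unfold A2; rw [rnk_zero_iff hp (hx 2), rnk_zero_iff hp (hx 3)]),
    cnt_rnk_aux A12 p (fun x hx => by
      unfold A12; rw [rnk_eq_iff hp (hx 1) (hx 2), rnk_zero_iff hp (hx 3)]),
    cnt_rnk_aux A13 p (fun x hx => by
      unfold A13; rw [rnk_eq_iff hp (hx 1) (hx 2), rnk_eq_iff hp (hx 2) (hx 3)]),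
    cnt_rnk_aux A2h p (fun x hx => by
      unfold A2h; rw [rnk_eq_iff hp (hx 0) (hx 1), rnk_eq_iff hp (hx 2) (hx 3)]),
    ind_congr (Dp_rnk hp), ind_congr (P5_rnk hp), ind_congr (P8_rnk hp),
    ind_congr (P10_rnk hp), ind_congr (P11_rnk hp)]

end rnktransfer


lemma act_zero (g : W) : act g (0 : V) = 0 := by
  funext i
  simp [act]

lemma sorted_version (q : V) : ∃ p : V, (∃ h ∈ Wfin, act h q = p) ∧ (∀ i, 0 ≤ p i) ∧
    p 0 ≤ p 1 ∧ p 1 ≤ p 2 ∧ p 2 ≤ p 3 := by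
  set σ := Tuple.sort (fun i => |q i|) with hσ
  have hmono := Tuple.monotone_sort (fun i => |q i|)
  refine ⟨fun i => |q (σ i)|, ⟨(fun i => decide (q (σ i) < 0), fun i => σ i),
    mem_Wfin.mpr σ.bijective, ?_⟩, fun i => abs_nonneg _, ?_, ?_, ?_⟩
  · funext i
    simp only [act]
    by_cases hlt : q (σ i) < 0
    · simp [hlt, abs_of_neg hlt]
    · simp [hlt, abs_of_nonneg (not_lt.mp hlt)]
  · exact hmono (show (0 : Fin 4) ≤ 1 by decide)
  · exact hmono (show (1 : Fin 4) ≤ 2 by decide)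
  · exact hmono (show (2 : Fin 4) ≤ 3 by decide)

section sortedbounds
variable {p : V}

lemma r0_step (h0 : ∀ i, 0 ≤ p i) (h01 : p 0 ≤ p 1) (h12 : p 1 ≤ p 2) (h23 : p 2 ≤ p 3) :
    r0 p (p 0) ≤ 1 ∧ r0 p (p 1) ≤ r0 p (p 0) + 1 ∧ r0 p (p 2) ≤ r0 p (p 1) + 1 ∧
      r0 p (p 3) ≤ r0 p (p 2) + 1 := by
  refine ⟨?_, ?_, ?_, ?_⟩
  · have hsub : (rset p).filter (fun v => 0 < v ∧ v ≤ p 0) ⊆ {p 0} := by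
      intro v hv
      rw [Finset.mem_filter] at hv
      obtain ⟨hv1, hv2, hv3⟩ := hv
      obtain ⟨j, _, rfl⟩ := Finset.mem_image.mp hv1
      have : p 0 ≤ p j := by fin_cases j <;> simp <;> linarith
      simp only [Finset.mem_singleton]
      omega
    calc r0 p (p 0) ≤ ({p 0} : Finset ℤ).card := Finset.card_le_card hsub
      _ = 1 := Finset.card_singleton _
  · have hsub : (rset p).filter (fun v => 0 < v ∧ v ≤ p 1) ⊆
        insert (p 1) ((rset p).filter (fun v => 0 < v ∧ v ≤ p 0)) := by
      intro v hv
      rw [Finset.mem_filter] at hv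
      obtain ⟨hv1, hv2, hv3⟩ := hv
      by_cases hle : v ≤ p 0
      · exact Finset.mem_insert_of_mem (Finset.mem_filter.mpr ⟨hv1, hv2, hle⟩)
      · obtain ⟨j, _, rfl⟩ := Finset.mem_image.mp hv1
        have : p j = p 1 := by fin_cases j <;> simp_all <;> omega
        rw [this]
        exact Finset.mem_insert_self _ _
    calc r0 p (p 1) ≤ _ := Finset.card_le_card hsub
      _ ≤ r0 p (p 0) + 1 := Finset.card_insert_le _ _
  · have hsub : (rset p).filter (fun v => 0 < v ∧ v ≤ p 2) ⊆
        insert (p 2) ((rset p).filter (fun v => 0 < v ∧ v ≤ p 1)) := by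
      intro v hv
      rw [Finset.mem_filter] at hv
      obtain ⟨hv1, hv2, hv3⟩ := hv
      by_cases hle : v ≤ p 1
      · exact Finset.mem_insert_of_mem (Finset.mem_filter.mpr ⟨hv1, hv2, hle⟩)
      · obtain ⟨j, _, rfl⟩ := Finset.mem_image.mp hv1
        have : p j = p 2 := by fin_cases j <;> simp_all <;> omega
        rw [this]
        exact Finset.mem_insert_self _ _
    calc r0 p (p 2) ≤ _ := Finset.card_le_card hsub
      _ ≤ r0 p (p 1) + 1 := Finset.card_insert_le _ _
  · have hsub : (rset p).filter (fun v => 0 < v ∧ v ≤ p 3) ⊆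
        insert (p 3) ((rset p).filter (fun v => 0 < v ∧ v ≤ p 2)) := by
      intro v hv
      rw [Finset.mem_filter] at hv
      obtain ⟨hv1, hv2, hv3⟩ := hv
      by_cases hle : v ≤ p 2
      · exact Finset.mem_insert_of_mem (Finset.mem_filter.mpr ⟨hv1, hv2, hle⟩)
      · obtain ⟨j, _, rfl⟩ := Finset.mem_image.mp hv1
        have : p j = p 3 := by fin_cases j <;> simp_all <;> omega
        rw [this]
        exact Finset.mem_insert_self _ _
    calc r0 p (p 3) ≤ _ := Finset.card_le_card hsub
      _ ≤ r0 p (p 2) + 1 := Finset.card_insert_le _ _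

end sortedbounds

set_option maxHeartbeats 4000000 in
lemma Eq1_of_vals (r : V) (n0 n1 n2 n3 : ℕ) (e0 : r 0 = n0) (e1 : r 1 = n1) (e2 : r 2 = n2)
    (e3 : r 3 = n3) (c1 : n0 ≤ 1) (c2 : n0 ≤ n1) (c3 : n1 ≤ n0 + 1) (c4 : n1 ≤ n2)
    (c5 : n2 ≤ n1 + 1) (c6 : n2 ≤ n3) (c7 : n3 ≤ n2 + 1) (c8 : 1 ≤ n3) : Eq1 r := by
  have hr : r = fun i => ((![n0, n1, n2, n3] i : ℕ) : ℤ) := by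
    funext i
    fin_cases i
    · simpa using e0
    · simpa using e1
    · simpa using e2
    · simpa using e3
  rw [hr]
  interval_cases n0 <;> interval_cases n1 <;> interval_cases n2 <;> interval_cases n3 <;> decide

lemma master (q : V) (hq : q ≠ 0) : Eq1 q := by
  obtain ⟨p, ⟨h, hhW, hact⟩, hp, h01, h12, h23⟩ := sorted_version q
  have hb := mem_Wfin.mp hhW
  rw [← (Eq1_act hhW q), hact]
  have hp0 : p ≠ 0 := by
    intro hp0
    apply hq
    have h2 := act_winv_left hb q
    rw [hact, hp0, act_zero] at h2
    exact h2.symm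
  have hp3 : 0 < p 3 := by
    obtain ⟨i, hi⟩ := Function.ne_iff.mp hp0
    have hi0 : p i ≠ 0 := by simpa using hi
    have hi' : 0 < p i := lt_of_le_of_ne (hp i) (Ne.symm hi0)
    have hle : p i ≤ p 3 := by fin_cases i <;> simp <;> linarith
    linarith
  rw [← Eq1_rnk hp]
  obtain ⟨c1, c3, c5, c7⟩ := r0_step hp h01 h12 h23
  exact Eq1_of_vals _ (r0 p (p 0)) (r0 p (p 1)) (r0 p (p 2)) (r0 p (p 3))
    (rnk_of_nonneg p (hp 0)) (rnk_of_nonneg p (hp 1)) (rnk_of_nonneg p (hp 2))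
    (rnk_of_nonneg p (hp 3)) c1 (r0_mono p h01) c3 (r0_mono p h12) c5 (r0_mono p h23) c7
    (r0_pos p hp3)


-- helpers for special pattern counting
lemma sqeq_of_abseq {a b : ℤ} (h : |a| = |b|) : a ^ 2 = b ^ 2 := by
  rw [← sq_abs a, ← sq_abs b, h]

lemma pm_of_sq_eq {a : ℤ} {m : ℕ} (h : a ^ 2 = (m : ℤ) ^ 2) : a = m ∨ a = -m := by
  have h2 : (a - m) * (a + m) = 0 := by linear_combination h
  rcases mul_eq_zero.mp h2 with h3 | h3
  · left; omega
  · right; omega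

lemma sumsq_split (q : V) : Qsum q = ∑ l ∈ Finset.univ.filter fun l => ¬ q l = 0, q l ^ 2 := by
  unfold Qsum
  rw [← Finset.sum_filter_add_sum_filter_not Finset.univ (fun l => q l = 0)]
  have h1 : ∑ l ∈ Finset.univ.filter fun l => q l = 0, q l ^ 2 = 0 := by
    apply Finset.sum_eq_zero
    intro l hl
    rw [(Finset.mem_filter.mp hl).2]
    ring
  rw [h1, zero_add]

lemma nzcard (q : V) : (Finset.univ.filter fun l => ¬ q l = 0).card = 4 - zc q := by
  have h := Finset.card_filter_add_card_filter_not (s := (Finset.univ : Finset (Fin 4)))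
    (p := fun l => q l = 0)
  have h2 : (Finset.univ : Finset (Fin 4)).card = 4 := by decide
  unfold zc
  omega

-- vanishing lemmas
lemma z11 {k : ℕ} (h : ∀ c : ℕ, c ^ 2 ≠ k) : ((SA k).filter P11).card = 0 := by
  rw [Finset.card_eq_zero, Finset.filter_eq_empty_iff]
  intro q hq hP
  have hsum := mem_SA.mp hq
  have hc : (Finset.univ.filter fun l => ¬ q l = 0).card = 1 := by
    have := nzcard q; unfold P11 at hP; omega
  obtain ⟨a, ha⟩ := Finset.card_eq_one.mp hc
  have hQ : Qsum q = q a ^ 2 := by rw [sumsq_split, ha, Finset.sum_singleton]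
  apply h (q a).natAbs
  have h3 : ((q a).natAbs : ℤ) ^ 2 = ((k : ℕ) : ℤ) := by rw [Int.natAbs_sq]; omega
  exact_mod_cast h3

lemma z5 {k : ℕ} (h : ∀ c : ℕ, 4 * c ^ 2 ≠ k) : ((SA k).filter P5).card = 0 := by
  rw [Finset.card_eq_zero, Finset.filter_eq_empty_iff]
  intro q hq hP
  have hsum := mem_SA.mp hq
  have h1 : ∀ j, q j ^ 2 = q 0 ^ 2 := fun j => sqeq_of_abseq (hP.2 j 0)
  have hQ : Qsum q = 4 * q 0 ^ 2 := by
    rw [Qsum_expand, h1 1, h1 2, h1 3]; ring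
  apply h (q 0).natAbs
  have h3 : 4 * ((q 0).natAbs : ℤ) ^ 2 = ((k : ℕ) : ℤ) := by rw [Int.natAbs_sq]; omega
  exact_mod_cast h3

lemma z8 {k : ℕ} (h : ∀ c : ℕ, 3 * c ^ 2 ≠ k) : ((SA k).filter P8).card = 0 := by
  rw [Finset.card_eq_zero, Finset.filter_eq_empty_iff]
  intro q hq hP
  have hsum := mem_SA.mp hq
  have hc : (Finset.univ.filter fun l => ¬ q l = 0).card = 3 := by
    have := nzcard q; obtain ⟨h1, -⟩ := hP; omega
  obtain ⟨a, b, c, hab, hac, hbc, habc⟩ := Finset.card_eq_three.mp hc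
  have hmem : ∀ x, x ∈ Finset.univ.filter (fun l => ¬ q l = 0) ↔ q x ≠ 0 := by
    intro x; simp
  have hqa : q a ≠ 0 := (hmem a).mp (by rw [habc]; simp)
  have hqb : q b ≠ 0 := (hmem b).mp (by rw [habc]; simp)
  have hqc : q c ≠ 0 := (hmem c).mp (by rw [habc]; simp)
  have hQ : Qsum q = 3 * q a ^ 2 := by
    rw [sumsq_split, habc]
    rw [Finset.sum_insert (by simp [hab, hac]), Finset.sum_insert (by simp [hbc]),
      Finset.sum_singleton]
    rw [sqeq_of_abseq (hP.2 b a hqb hqa), sqeq_of_abseq (hP.2 c a hqc hqa)]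
    ring
  apply h (q a).natAbs
  have h3 : 3 * ((q a).natAbs : ℤ) ^ 2 = ((k : ℕ) : ℤ) := by rw [Int.natAbs_sq]; omega
  exact_mod_cast h3

lemma z10 {k : ℕ} (h : ∀ c : ℕ, 2 * c ^ 2 ≠ k) : ((SA k).filter P10).card = 0 := by
  rw [Finset.card_eq_zero, Finset.filter_eq_empty_iff]
  intro q hq hP
  have hsum := mem_SA.mp hq
  have hc : (Finset.univ.filter fun l => ¬ q l = 0).card = 2 := by
    have := nzcard q; obtain ⟨h1, -⟩ := hP; omega
  obtain ⟨a, b, hab, habc⟩ := Finset.card_eq_two.mp hc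
  have hqa : q a ≠ 0 := by
    have : a ∈ Finset.univ.filter (fun l => ¬ q l = 0) := by rw [habc]; simp
    simpa using this
  have hqb : q b ≠ 0 := by
    have : b ∈ Finset.univ.filter (fun l => ¬ q l = 0) := by rw [habc]; simp
    simpa using this
  have hQ : Qsum q = 2 * q a ^ 2 := by
    rw [sumsq_split, habc, Finset.sum_pair hab, sqeq_of_abseq (hP.2 b a hqb hqa)]
    ring
  apply h (q a).natAbs
  have h3 : 2 * ((q a).natAbs : ℤ) ^ 2 = ((k : ℕ) : ℤ) := by rw [Int.natAbs_sq]; omega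
  exact_mod_cast h3


lemma c11count {m : ℕ} (hm : 0 < m) : ((SA (m ^ 2)).filter P11).card = 8 := by
  have hmz : ((m : ℤ)) ≠ 0 := by exact_mod_cast hm.ne'
  have hset : (SA (m ^ 2)).filter P11 =
      (Finset.univ : Finset (Fin 4 × Bool)).image
        (fun is => (fun j => if j = is.1 then (if is.2 then (m : ℤ) else -m) else 0 : V)) := by
    ext q
    constructor
    · intro hq
      obtain ⟨hq1, hq2⟩ := Finset.mem_filter.mp hq
      have hsum := mem_SA.mp hq1
      have hc : (Finset.univ.filter fun l => ¬ q l = 0).card = 1 := by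
        have := nzcard q; unfold P11 at hq2; omega
      obtain ⟨a, ha⟩ := Finset.card_eq_one.mp hc
      have hmem : ∀ x, (¬ q x = 0) ↔ x = a := by
        intro x
        constructor
        · intro hx
          have : x ∈ Finset.univ.filter fun l => ¬ q l = 0 := by simp [hx]
          rw [ha] at this; simpa using this
        · intro hxa
          subst hxa
          have : x ∈ Finset.univ.filter fun l => ¬ q l = 0 := by rw [ha]; simp
          simpa using this
      have hQ : q a ^ 2 = ((m : ℤ)) ^ 2 := by
        have : Qsum q = q a ^ 2 := by rw [sumsq_split, ha, Finset.sum_singleton]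
        rw [this] at hsum
        rw [hsum]; push_cast; ring
      have hzero : ∀ x, x ≠ a → q x = 0 := fun x hx => by
        by_contra hc2; exact hx ((hmem x).mp hc2)
      rcases pm_of_sq_eq hQ with hv | hv
      · refine Finset.mem_image.mpr ⟨(a, true), Finset.mem_univ _, ?_⟩
        funext j
        by_cases hj : j = a
        · subst hj; simp [hv]
        · simp [hj, hzero j hj]
      · refine Finset.mem_image.mpr ⟨(a, false), Finset.mem_univ _, ?_⟩
        funext j
        by_cases hj : j = a
        · subst hj; simp [hv]
        · simp [hj, hzero j hj]
    · intro hq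
      obtain ⟨⟨i, s⟩, -, rfl⟩ := Finset.mem_image.mp hq
      refine Finset.mem_filter.mpr ⟨mem_SA.mpr ?_, ?_⟩
      · unfold Qsum
        have : ∀ j, ((fun j => if j = i then (if s then (m:ℤ) else -m) else 0) j) ^ 2
            = if j = i then (m:ℤ)^2 else 0 := by
          intro j
          by_cases hj : j = i
          · cases s <;> simp [hj] <;> ring
          · simp [hj]
        rw [Finset.sum_congr rfl fun j _ => this j, Finset.sum_ite_eq' Finset.univ i
          (fun _ => ((m:ℤ))^2)]
        simp
        try push_cast
        try ring
      · unfold P11 zc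
        have : (Finset.univ.filter fun j =>
            (fun j => if j = i then (if s then (m:ℤ) else -m) else 0) j = 0) = {i}ᶜ := by
          ext j
          by_cases hj : j = i
          · subst hj
            cases s <;> simp [hmz] <;> omega
          · simp [hj]
        rw [this]
        rw [Finset.card_compl]
        simp
    
  rw [hset, Finset.card_image_of_injOn]
  · simp
  · intro x _ y _ hxy
    obtain ⟨i, s⟩ := x
    obtain ⟨i', s'⟩ := y
    have h1 := congrFun hxy i
    have h2 : i = i' := by
      by_contra hne
      simp [hne] at h1
      cases s <;> simp at h1 <;> omega
    subst h2
    have h3 := congrFun hxy i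
    simp at h3
    cases s <;> cases s' <;> simp at h3 <;> first | rfl | omega


lemma ite_pm_inj {m : ℕ} (hm : 0 < m) {b b' : Bool}
    (h : (if b then (m:ℤ) else -m) = (if b' then (m:ℤ) else -m)) : b = b' := by
  cases b <;> cases b' <;> simp at h <;> first | rfl | omega

lemma c5count {m : ℕ} (hm : 0 < m) : ((SA (4 * m ^ 2)).filter P5).card = 16 := by
  have hmz : ((m : ℤ)) ≠ 0 := by exact_mod_cast hm.ne'
  have hset : (SA (4 * m ^ 2)).filter P5 =
      (Finset.univ : Finset (Fin 4 → Bool)).image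
        (fun s => (fun j => if s j then (m : ℤ) else -m : V)) := by
    ext q
    constructor
    · intro hq
      obtain ⟨hq1, hq2⟩ := Finset.mem_filter.mp hq
      have hsum := mem_SA.mp hq1
      have h1 : ∀ j, q j ^ 2 = q 0 ^ 2 := fun j => sqeq_of_abseq (hq2.2 j 0)
      have hQ : q 0 ^ 2 = ((m : ℤ)) ^ 2 := by
        rw [Qsum_expand, h1 1, h1 2, h1 3] at hsum
        push_cast at hsum
        nlinarith [hsum]
      have hj2 : ∀ j, q j ^ 2 = ((m : ℤ)) ^ 2 := fun j => (h1 j).trans hQ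
      refine Finset.mem_image.mpr ⟨fun j => decide (q j = m), Finset.mem_univ _, ?_⟩
      funext j
      rcases pm_of_sq_eq (hj2 j) with hv | hv
      · simp [hv]
      · rw [hv]
        have : ¬ ((- (m:ℤ)) = m) := by omega
        simp [this, hv]
    · intro hq
      obtain ⟨s, -, rfl⟩ := Finset.mem_image.mp hq
      have hvsq : ∀ j, ((fun j => if s j then (m:ℤ) else -m) j) ^ 2 = ((m:ℤ))^2 := by
        intro j; by_cases hj : s j <;> simp [hj] <;> ring
      have hvne : ∀ j, ((fun j => if s j then (m:ℤ) else -m) j) ≠ 0 := by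
        intro j; by_cases hj : s j <;> simp [hj] <;> omega
      have hvabs : ∀ j, |((fun j => if s j then (m:ℤ) else -m) j)| = m := by
        intro j; by_cases hj : s j <;> simp [hj]
      refine Finset.mem_filter.mpr ⟨mem_SA.mpr ?_, ?_, ?_⟩
      · rw [Qsum_expand, hvsq 0, hvsq 1, hvsq 2, hvsq 3]
        push_cast
        ring
      · unfold zc
        rw [Finset.card_eq_zero, Finset.filter_eq_empty_iff]
        intro j _
        exact hvne j
      · intro j k
        rw [hvabs j, hvabs k]
  rw [hset, Finset.card_image_of_injOn]
  · simp
  · intro s _ s' _ he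
    funext j
    have := congrFun he j
    cases hs : s j <;> cases hs' : s' j <;> simp [hs, hs'] at this <;> first | rfl | omega

lemma c8count {m : ℕ} (hm : 0 < m) : ((SA (3 * m ^ 2)).filter P8).card = 32 := by
  have hmz : ((m : ℤ)) ≠ 0 := by exact_mod_cast hm.ne'
  have hset : (SA (3 * m ^ 2)).filter P8 =
      (Finset.univ.sigma fun i : Fin 4 =>
        Finset.univ.filter fun s : Fin 4 → Bool => s i = false).image
        (fun is => (fun j => if j = is.1 then 0 else if is.2 j then (m : ℤ) else -m : V)) := by
    ext q
    constructor
    · intro hq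
      obtain ⟨hq1, hq2⟩ := Finset.mem_filter.mp hq
      have hsum := mem_SA.mp hq1
      obtain ⟨hz, habs⟩ := hq2
      obtain ⟨a, ha⟩ := Finset.card_eq_one.mp (show (Finset.univ.filter fun l => q l = 0).card = 1 from hz)
      have hmem : ∀ x, q x = 0 ↔ x = a := by
        intro x
        constructor
        · intro hx
          have : x ∈ Finset.univ.filter fun l => q l = 0 := by simp [hx]
          rw [ha] at this; simpa using this
        · intro hxa
          subst hxa
          have : x ∈ Finset.univ.filter fun l => q l = 0 := by rw [ha]; simp
          simpa using this
      have hnz : ∀ x, x ≠ a → q x ≠ 0 := fun x hx hc => hx ((hmem x).mp hc)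
      -- pivot
      set j0 : Fin 4 := if a = 0 then 1 else 0 with hj0def
      have hj0 : j0 ≠ a := by
        rw [hj0def]
        by_cases h : a = 0
        · subst h; decide
        · simp only [h, if_false]
          exact fun hc => h hc.symm
      have hq0 : q j0 ≠ 0 := hnz j0 hj0
      have hfil : (Finset.univ.filter fun l => ¬ q l = 0) = {a}ᶜ := by
        ext x
        simp [hmem x]
      have hQ : Qsum q = 3 * q j0 ^ 2 := by
        rw [sumsq_split, hfil]
        rw [Finset.sum_congr rfl (fun x hx => by
          have hxa : x ≠ a := by simpa using hx
          exact sqeq_of_abseq (habs x j0 (hnz x hxa) hq0))]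
        rw [Finset.sum_const]
        have : ({a}ᶜ : Finset (Fin 4)).card = 3 := by
          rw [Finset.card_compl]; simp
        rw [this]
        ring
      have hsq : q j0 ^ 2 = ((m:ℤ))^2 := by
        rw [hQ] at hsum
        push_cast at hsum
        nlinarith [hsum]
      have hallsq : ∀ x, x ≠ a → q x ^ 2 = ((m:ℤ))^2 := fun x hx =>
        (sqeq_of_abseq (habs x j0 (hnz x hx) hq0)).trans hsq
      refine Finset.mem_image.mpr ⟨⟨a, fun j => if j = a then false else decide (q j = m)⟩,
        Finset.mem_sigma.mpr ⟨Finset.mem_univ _, Finset.mem_filter.mpr ⟨Finset.mem_univ _, by simp⟩⟩, ?_⟩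
      funext j
      by_cases hj : j = a
      · subst hj; simp [(hmem j).mpr rfl]
      · rcases pm_of_sq_eq (hallsq j hj) with hv | hv
        · simp [hj, hv]
        · have hne : ¬ (q j = m) := by rw [hv]; omega
          simp only [hj, if_false, hne, decide_eq_true_eq]
          simp [hne, hv]
    · intro hq
      obtain ⟨⟨i, s⟩, hmem, rfl⟩ := Finset.mem_image.mp hq
      simp only []
      have hvsq : ∀ j, j ≠ i → ((fun j => if j = i then 0 else if s j then (m:ℤ) else -m) j) ^ 2 = ((m:ℤ))^2 := by
        intro j hj; by_cases hs : s j <;> simp [hj, hs] <;> ring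
      have hvne : ∀ j, j ≠ i → ((fun j => if j = i then 0 else if s j then (m:ℤ) else -m) j) ≠ 0 := by
        intro j hj; by_cases hs : s j <;> simp [hj, hs] <;> omega
      have hvabs : ∀ j, j ≠ i → |((fun j => if j = i then 0 else if s j then (m:ℤ) else -m) j)| = m := by
        intro j hj; by_cases hs : s j <;> simp [hj, hs]
      have hziff : ∀ j, ((fun j => if j = i then 0 else if s j then (m:ℤ) else -m) j = 0 ↔ j = i) := by
        intro j
        constructor
        · intro h
          by_contra hj
          exact hvne j hj h
        · rintro rfl; simp
      have hfil : (Finset.univ.filter fun j =>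
          (fun j => if j = i then 0 else if s j then (m:ℤ) else -m) j = 0) = {i} := by
        ext j
        simp only [Finset.mem_filter, Finset.mem_univ, true_and, Finset.mem_singleton]
        exact hziff j
      refine Finset.mem_filter.mpr ⟨mem_SA.mpr ?_, ?_, ?_⟩
      · rw [sumsq_split]
        have hfil2 : (Finset.univ.filter fun j =>
            ¬ (fun j => if j = i then 0 else if s j then (m:ℤ) else -m) j = 0) = {i}ᶜ := by
          ext j
          simp only [Finset.mem_filter, Finset.mem_univ, true_and, Finset.mem_compl,
            Finset.mem_singleton]
          exact not_congr (hziff j)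
        rw [hfil2]
        rw [Finset.sum_congr rfl (fun x hx => hvsq x (by simpa using hx))]
        rw [Finset.sum_const]
        have : ({i}ᶜ : Finset (Fin 4)).card = 3 := by rw [Finset.card_compl]; simp
        rw [this]
        push_cast
        ring
      · unfold zc
        rw [hfil]
        simp
      · intro j k hj hk
        have hji : j ≠ i := by
          intro h; subst h; simp at hj
        have hki : k ≠ i := by
          intro h; subst h; simp at hk
        rw [hvabs j hji, hvabs k hki]
  rw [hset, Finset.card_image_of_injOn]
  · rw [Finset.card_sigma]
    rw [Finset.sum_congr rfl (fun i _ => show (Finset.univ.filter fun s : Fin 4 → Bool => s i = false).card = 8 by fin_cases i <;> decide)]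
    simp
  · rintro ⟨i, s⟩ his ⟨i', s'⟩ his' he
    simp only [Finset.coe_sigma, Set.mem_sigma_iff] at his his'
    have hii : i = i' := by
      by_contra hne
      have h1 : (0 : ℤ) = if s' i then (m:ℤ) else -m := by
        have h0 := congrFun he i
        simpa [hne] using h0
      rcases Bool.eq_false_or_eq_true (s' i) with hb | hb <;> rw [hb] at h1 <;> simp at h1 <;> omega
    subst hii
    have hs : s = s' := by
      funext j
      by_cases hj : j = i
      · subst hj
        have e1 : s j = false := by simpa using (Finset.mem_filter.mp his.2).2
        have e2 : s' j = false := by simpa using (Finset.mem_filter.mp his'.2).2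
        rw [e1, e2]
      · have h1 : (if s j then (m:ℤ) else -m) = if s' j then (m:ℤ) else -m := by
          have h0 := congrFun he j
          simpa [hj] using h0
        exact ite_pm_inj hm h1
    rw [hs]


lemma c10count {m : ℕ} (hm : 0 < m) : ((SA (2 * m ^ 2)).filter P10).card = 24 := by
  have hmz : ((m : ℤ)) ≠ 0 := by exact_mod_cast hm.ne'
  set F : (Fin 4 × Fin 4) × (Bool × Bool) → V := fun x =>
    (fun l => if l = x.1.1 then (if x.2.1 then (m : ℤ) else -m)
      else if l = x.1.2 then (if x.2.2 then (m : ℤ) else -m) else 0) with hF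
  set dom : Finset ((Fin 4 × Fin 4) × (Bool × Bool)) :=
    ((Finset.univ ×ˢ Finset.univ).filter fun p : Fin 4 × Fin 4 => p.1 < p.2) ×ˢ Finset.univ
    with hdom
  have hset : (SA (2 * m ^ 2)).filter P10 = dom.image F := by
    ext q
    constructor
    · intro hq
      obtain ⟨hq1, hq2⟩ := Finset.mem_filter.mp hq
      have hsum := mem_SA.mp hq1
      obtain ⟨hz, habs⟩ := hq2
      have hc : (Finset.univ.filter fun l => ¬ q l = 0).card = 2 := by
        have := nzcard q; omega
      obtain ⟨a, b, hab, habf⟩ := Finset.card_eq_two.mp hc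
      have hmem : ∀ x, ¬ q x = 0 ↔ (x = a ∨ x = b) := by
        intro x
        constructor
        · intro hx
          have : x ∈ Finset.univ.filter fun l => ¬ q l = 0 := by simp [hx]
          rw [habf] at this; simpa using this
        · intro hx
          have : x ∈ ({a, b} : Finset (Fin 4)) := by
            rcases hx with h | h <;> simp [h]
          rw [← habf] at this; simpa using this
      have hqa : q a ≠ 0 := (hmem a).mpr (Or.inl rfl)
      have hqb : q b ≠ 0 := (hmem b).mpr (Or.inr rfl)
      have hzero : ∀ x, x ≠ a → x ≠ b → q x = 0 := by
        intro x hxa hxb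
        by_contra hc2
        rcases (hmem x).mp hc2 with h | h
        · exact hxa h
        · exact hxb h
      have hQ : Qsum q = 2 * q a ^ 2 := by
        rw [sumsq_split, habf, Finset.sum_pair hab, sqeq_of_abseq (habs b a hqb hqa)]
        ring
      have hsqa : q a ^ 2 = ((m:ℤ))^2 := by
        rw [hQ] at hsum
        push_cast at hsum
        nlinarith [hsum]
      have hsqb : q b ^ 2 = ((m:ℤ))^2 := by
        rw [sqeq_of_abseq (habs b a hqb hqa)]
        exact hsqa
      have hqaval := pm_of_sq_eq hsqa
      have hqbval := pm_of_sq_eq hsqb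
      have key : ∀ (x y : Fin 4), x < y → (¬ q x = 0 ↔ (x = a ∨ x = b)) → q ∈ dom.image F →
          True := fun _ _ _ _ _ => trivial
      rcases lt_or_gt_of_ne hab with hlt | hgt
      · refine Finset.mem_image.mpr ⟨((a, b), (decide (q a = m), decide (q b = m))),
          Finset.mem_product.mpr ⟨Finset.mem_filter.mpr ⟨Finset.mem_product.mpr
            ⟨Finset.mem_univ _, Finset.mem_univ _⟩, hlt⟩, Finset.mem_univ _⟩, ?_⟩
        funext l
        rw [hF]
        by_cases hla : l = a
        · subst hla
          rcases hqaval with hv | hv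
          · simp [hv]
          · have hne : ¬ (q l = m) := by rw [hv]; omega
            (simp [hne, hv]; try omega; try (intro h99; omega))
        · by_cases hlb : l = b
          · subst hlb
            rcases hqbval with hv | hv
            · simp [hla, hv]
            · have hne : ¬ (q l = m) := by rw [hv]; omega
              (simp [hla, hne, hv]; try omega; try (intro h99; omega))
          · simp [hla, hlb, hzero l hla hlb]
      · refine Finset.mem_image.mpr ⟨((b, a), (decide (q b = m), decide (q a = m))),
          Finset.mem_product.mpr ⟨Finset.mem_filter.mpr ⟨Finset.mem_product.mpr
            ⟨Finset.mem_univ _, Finset.mem_univ _⟩, hgt⟩, Finset.mem_univ _⟩, ?_⟩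
        funext l
        rw [hF]
        by_cases hlb : l = b
        · subst hlb
          rcases hqbval with hv | hv
          · simp [hv]
          · have hne : ¬ (q l = m) := by rw [hv]; omega
            (simp [hne, hv]; try omega; try (intro h99; omega))
        · by_cases hla : l = a
          · subst hla
            rcases hqaval with hv | hv
            · simp [hlb, hv]
            · have hne : ¬ (q l = m) := by rw [hv]; omega
              (simp [hlb, hne, hv]; try omega; try (intro h99; omega))
          · simp [hla, hlb, hzero l hla hlb]
    · intro hq
      obtain ⟨⟨⟨i, j⟩, ⟨s, t⟩⟩, hmemd, rfl⟩ := Finset.mem_image.mp hq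
      have hij : i < j := by
        have := (Finset.mem_filter.mp (Finset.mem_product.mp hmemd).1).2
        simpa using this
      have hijne : i ≠ j := ne_of_lt hij
      have hvi : F ((i, j), (s, t)) i = if s then (m:ℤ) else -m := by rw [hF]; simp
      have hvj : F ((i, j), (s, t)) j = if t then (m:ℤ) else -m := by
        rw [hF]; simp [hijne.symm]
      have hvz : ∀ l, l ≠ i → l ≠ j → F ((i, j), (s, t)) l = 0 := by
        intro l hli hlj
        rw [hF]; simp [hli, hlj]
      have hvine : F ((i, j), (s, t)) i ≠ 0 := by
        rw [hvi]; rcases Bool.eq_false_or_eq_true s with hb | hb <;> rw [hb] <;> simpa using hmz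
      have hvjne : F ((i, j), (s, t)) j ≠ 0 := by
        rw [hvj]; rcases Bool.eq_false_or_eq_true t with hb | hb <;> rw [hb] <;> simpa using hmz
      have hvisq : F ((i, j), (s, t)) i ^ 2 = ((m:ℤ))^2 := by
        rw [hvi]; rcases Bool.eq_false_or_eq_true s with hb | hb <;> rw [hb] <;> simp <;> ring
      have hvjsq : F ((i, j), (s, t)) j ^ 2 = ((m:ℤ))^2 := by
        rw [hvj]; rcases Bool.eq_false_or_eq_true t with hb | hb <;> rw [hb] <;> simp <;> ring
      have hviabs : |F ((i, j), (s, t)) i| = m := by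
        rw [hvi]; rcases Bool.eq_false_or_eq_true s with hb | hb <;> rw [hb] <;> simp
      have hvjabs : |F ((i, j), (s, t)) j| = m := by
        rw [hvj]; rcases Bool.eq_false_or_eq_true t with hb | hb <;> rw [hb] <;> simp
      have hziff : ∀ l, (F ((i, j), (s, t)) l = 0 ↔ ¬ (l = i ∨ l = j)) := by
        intro l
        constructor
        · intro h
          rintro (rfl | rfl)
          · exact hvine h
          · exact hvjne h
        · intro h
          push_neg at h
          exact hvz l h.1 h.2
      refine Finset.mem_filter.mpr ⟨mem_SA.mpr ?_, ?_, ?_⟩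
      · rw [sumsq_split]
        have hfil : (Finset.univ.filter fun l => ¬ F ((i, j), (s, t)) l = 0) = {i, j} := by
          ext l
          simp only [Finset.mem_filter, Finset.mem_univ, true_and, Finset.mem_insert,
            Finset.mem_singleton]
          exact (not_congr (hziff l)).trans not_not
        rw [hfil, Finset.sum_pair hijne, hvisq, hvjsq]
        push_cast
        ring
      · unfold zc
        have hfil : (Finset.univ.filter fun l => F ((i, j), (s, t)) l = 0) = ({i, j} : Finset (Fin 4))ᶜ := by
          ext l
          simp only [Finset.mem_filter, Finset.mem_univ, true_and, Finset.mem_compl,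
            Finset.mem_insert, Finset.mem_singleton]
          exact hziff l
        rw [hfil, Finset.card_compl]
        rw [Finset.card_pair hijne]
        simp
      · intro x y hx hy
        have hxm : x = i ∨ x = j := by
          by_contra h
          push_neg at h
          exact hx (hvz x h.1 h.2)
        have hym : y = i ∨ y = j := by
          by_contra h
          push_neg at h
          exact hy (hvz y h.1 h.2)
        rcases hxm with rfl | rfl <;> rcases hym with rfl | rfl <;>
          simp only [hviabs, hvjabs]
  rw [hset, Finset.card_image_of_injOn]
  · rw [hdom, Finset.card_product]
    have : ((Finset.univ ×ˢ Finset.univ).filter fun p : Fin 4 × Fin 4 => p.1 < p.2).card = 6 := by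
      decide
    rw [this]
    simp
  · rintro ⟨⟨i, j⟩, ⟨s, t⟩⟩ hd1 ⟨⟨i', j'⟩, ⟨s', t'⟩⟩ hd2 he
    have hij : i < j := by
      have := Finset.mem_coe.mp hd1
      have h2 := (Finset.mem_filter.mp (Finset.mem_product.mp this).1).2
      simpa using h2
    have hij' : i' < j' := by
      have := Finset.mem_coe.mp hd2
      have h2 := (Finset.mem_filter.mp (Finset.mem_product.mp this).1).2
      simpa using h2
    have hne : i ≠ j := ne_of_lt hij
    have hne' : i' ≠ j' := ne_of_lt hij'
    -- nonzero positions coincide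
    have hval : ∀ l, F ((i, j), (s, t)) l = F ((i', j'), (s', t')) l := fun l => congrFun he l
    have hz1 : ∀ l, (l = i ∨ l = j) ↔ (l = i' ∨ l = j') := by
      intro l
      constructor
      · intro h
        by_contra hc
        push_neg at hc
        have h0 : F ((i', j'), (s', t')) l = 0 := by rw [hF]; simp [hc.1, hc.2]
        rw [← hval l] at h0
        rcases h with rfl | rfl
        · rw [hF] at h0; simp at h0
          rcases Bool.eq_false_or_eq_true s with hb | hb <;> rw [hb] at h0 <;> simp at h0 <;> omega
        · rw [hF] at h0
          simp [hne.symm] at h0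
          rcases Bool.eq_false_or_eq_true t with hb | hb <;> rw [hb] at h0 <;> simp at h0 <;> omega
      · intro h
        by_contra hc
        push_neg at hc
        have h0 : F ((i, j), (s, t)) l = 0 := by rw [hF]; simp [hc.1, hc.2]
        rw [hval l] at h0
        rcases h with rfl | rfl
        · rw [hF] at h0; simp at h0
          rcases Bool.eq_false_or_eq_true s' with hb | hb <;> rw [hb] at h0 <;> simp at h0 <;> omega
        · rw [hF] at h0
          simp [hne'.symm] at h0
          rcases Bool.eq_false_or_eq_true t' with hb | hb <;> rw [hb] at h0 <;> simp at h0 <;> omega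
    have hii : i = i' ∧ j = j' := by
      have hi1 := (hz1 i).mp (Or.inl rfl)
      have hj1 := (hz1 j).mp (Or.inr rfl)
      rcases hi1 with h1 | h1
      · refine ⟨h1, ?_⟩
        rcases hj1 with h2 | h2
        · exfalso; rw [← h1] at h2; exact hne h2.symm
        · exact h2
      · exfalso
        rcases hj1 with h2 | h2
        · -- i = j', j = i' : then i' < j' means j < i, but i < j
          rw [h1] at hij
          rw [h2] at hij
          omega
        · rw [← h2] at h1; exact hne h1
    obtain ⟨h1', h2'⟩ := hii
    subst h1'
    subst h2' 
    have hs : s = s' := by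
      apply ite_pm_inj hm
      have h1 := hval i
      rw [hF] at h1
      simpa using h1
    have ht : t = t' := by
      apply ite_pm_inj hm
      have h1 := hval j
      rw [hF] at h1
      simpa [hne.symm] using h1
    rw [hs, ht]


lemma N4_eq (k : ℕ) : N4 k = (SA k).card := by
  rw [N4]
  have hs : {q : ℤ × ℤ × ℤ × ℤ | q.1 ^ 2 + q.2.1 ^ 2 + q.2.2.1 ^ 2 + q.2.2.2 ^ 2 = (k : ℤ)} =
      ↑((SA k).image fun q => (q 0, q 1, q 2, q 3)) := by
    ext x
    simp only [Set.mem_setOf_eq, Finset.coe_image, Set.mem_image, Finset.mem_coe]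
    constructor
    · intro h
      refine ⟨![x.1, x.2.1, x.2.2.1, x.2.2.2], mem_SA.mpr ?_, ?_⟩
      · rw [Qsum_expand]
        simpa using h
      · simp
    · rintro ⟨q, hq, rfl⟩
      have := mem_SA.mp hq
      rw [Qsum_expand] at this
      exact this
  rw [hs, Set.ncard_coe_finset, Finset.card_image_of_injOn]
  intro q _ q' _ h
  funext i
  fin_cases i
  · exact congrArg (fun t => t.1) h
  · exact congrArg (fun t => t.2.1) h
  · exact congrArg (fun t => t.2.2.1) h
  · exact congrArg (fun t => t.2.2.2) h

lemma N112_eq (k : ℕ) : N112 k = ((SA k).filter A112).card := by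
  rw [N112]
  have hs : {t : ℤ × ℤ × ℤ | t.1 ^ 2 + t.2.1 ^ 2 + 2 * t.2.2 ^ 2 = (k : ℤ)} =
      ↑(((SA k).filter A112).image fun q => (q 0, q 1, q 2)) := by
    ext x
    simp only [Set.mem_setOf_eq, Finset.coe_image, Set.mem_image, Finset.mem_coe]
    constructor
    · intro h
      refine ⟨![x.1, x.2.1, x.2.2, x.2.2], Finset.mem_filter.mpr ⟨mem_SA.mpr ?_, ?_⟩, ?_⟩
      · rw [Qsum_expand]
        show x.1 ^ 2 + x.2.1 ^ 2 + x.2.2 ^ 2 + x.2.2 ^ 2 = (k : ℤ)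
        linarith
      · show (![x.1, x.2.1, x.2.2, x.2.2] : V) 2 = ![x.1, x.2.1, x.2.2, x.2.2] 3
        simp
      · simp
    · rintro ⟨q, hq, rfl⟩
      obtain ⟨hq1, hq2⟩ := Finset.mem_filter.mp hq
      have := mem_SA.mp hq1
      rw [Qsum_expand] at this
      have h23 : q 2 = q 3 := hq2
      show q 0 ^ 2 + q 1 ^ 2 + 2 * q 2 ^ 2 = (k : ℤ)
      rw [h23] at this ⊢
      linarith
  rw [hs, Set.ncard_coe_finset, Finset.card_image_of_injOn]
  intro q hq q' hq' h
  have e2 : q 2 = q' 2 := congrArg (fun t => t.2.2) h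
  funext i
  fin_cases i
  · exact congrArg (fun t => t.1) h
  · exact congrArg (fun t => t.2.1) h
  · exact e2
  · have h3 : q 3 = q 2 := ((Finset.mem_filter.mp (Finset.mem_coe.mp hq)).2 : q 2 = q 3).symm
    have h3' : q' 3 = q' 2 := ((Finset.mem_filter.mp (Finset.mem_coe.mp hq')).2 : q' 2 = q' 3).symm
    show q 3 = q' 3
    rw [h3, h3', e2]

lemma N3_eq (k : ℕ) : N3 k = ((SA k).filter A3).card := by
  rw [N3]
  have hs : {t : ℤ × ℤ × ℤ | t.1 ^ 2 + t.2.1 ^ 2 + t.2.2 ^ 2 = (k : ℤ)} =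
      ↑(((SA k).filter A3).image fun q => (q 0, q 1, q 2)) := by
    ext x
    simp only [Set.mem_setOf_eq, Finset.coe_image, Set.mem_image, Finset.mem_coe]
    constructor
    · intro h
      refine ⟨![x.1, x.2.1, x.2.2, 0], Finset.mem_filter.mpr ⟨mem_SA.mpr ?_, ?_⟩, ?_⟩
      · rw [Qsum_expand]
        show x.1 ^ 2 + x.2.1 ^ 2 + x.2.2 ^ 2 + (0:ℤ) ^ 2 = (k : ℤ)
        linarith
      · show (![x.1, x.2.1, x.2.2, 0] : V) 3 = 0
        simp
      · simp
    · rintro ⟨q, hq, rfl⟩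
      obtain ⟨hq1, hq2⟩ := Finset.mem_filter.mp hq
      have := mem_SA.mp hq1
      rw [Qsum_expand] at this
      have h3 : q 3 = 0 := hq2
      show q 0 ^ 2 + q 1 ^ 2 + q 2 ^ 2 = (k : ℤ)
      rw [h3] at this
      linarith
  rw [hs, Set.ncard_coe_finset, Finset.card_image_of_injOn]
  intro q hq q' hq' h
  funext i
  fin_cases i
  · exact congrArg (fun t => t.1) h
  · exact congrArg (fun t => t.2.1) h
  · exact congrArg (fun t => t.2.2) h
  · have h3 : q 3 = 0 := (Finset.mem_filter.mp (Finset.mem_coe.mp hq)).2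
    have h3' : q' 3 = 0 := (Finset.mem_filter.mp (Finset.mem_coe.mp hq')).2
    show q 3 = q' 3
    rw [h3, h3']

lemma N2_eq (k : ℕ) : N2 k = ((SA k).filter A2).card := by
  rw [N2]
  have hs : {p : ℤ × ℤ | p.1 ^ 2 + p.2 ^ 2 = (k : ℤ)} =
      ↑(((SA k).filter A2).image fun q => (q 0, q 1)) := by
    ext x
    simp only [Set.mem_setOf_eq, Finset.coe_image, Set.mem_image, Finset.mem_coe]
    constructor
    · intro h
      refine ⟨![x.1, x.2, 0, 0], Finset.mem_filter.mpr ⟨mem_SA.mpr ?_, ?_, ?_⟩, ?_⟩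
      · rw [Qsum_expand]
        show x.1 ^ 2 + x.2 ^ 2 + (0:ℤ) ^ 2 + (0:ℤ) ^ 2 = (k : ℤ)
        linarith
      · show (![x.1, x.2, 0, 0] : V) 2 = 0
        simp
      · show (![x.1, x.2, 0, 0] : V) 3 = 0
        simp
      · simp
    · rintro ⟨q, hq, rfl⟩
      obtain ⟨hq1, hq2, hq3⟩ := Finset.mem_filter.mp hq
      have := mem_SA.mp hq1
      rw [Qsum_expand] at this
      show q 0 ^ 2 + q 1 ^ 2 = (k : ℤ)
      rw [(hq2 : q 2 = 0), (hq3 : q 3 = 0)] at this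
      linarith
  rw [hs, Set.ncard_coe_finset, Finset.card_image_of_injOn]
  intro q hq q' hq' h
  have hm := (Finset.mem_filter.mp (Finset.mem_coe.mp hq)).2
  have hm' := (Finset.mem_filter.mp (Finset.mem_coe.mp hq')).2
  funext i
  fin_cases i
  · exact congrArg (fun t => t.1) h
  · exact congrArg (fun t => t.2) h
  · show q 2 = q' 2
    rw [hm.1, hm'.1]
  · show q 3 = q' 3
    rw [hm.2, hm'.2]

lemma N12_eq (k : ℕ) : N12 k = ((SA k).filter A12).card := by
  rw [N12]
  have hs : {p : ℤ × ℤ | p.1 ^ 2 + 2 * p.2 ^ 2 = (k : ℤ)} =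
      ↑(((SA k).filter A12).image fun q => (q 0, q 1)) := by
    ext x
    simp only [Set.mem_setOf_eq, Finset.coe_image, Set.mem_image, Finset.mem_coe]
    constructor
    · intro h
      refine ⟨![x.1, x.2, x.2, 0], Finset.mem_filter.mpr ⟨mem_SA.mpr ?_, ?_, ?_⟩, ?_⟩
      · rw [Qsum_expand]
        show x.1 ^ 2 + x.2 ^ 2 + x.2 ^ 2 + (0:ℤ) ^ 2 = (k : ℤ)
        linarith
      · show (![x.1, x.2, x.2, 0] : V) 1 = ![x.1, x.2, x.2, 0] 2
        simp
      · show (![x.1, x.2, x.2, 0] : V) 3 = 0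
        simp
      · simp
    · rintro ⟨q, hq, rfl⟩
      obtain ⟨hq1, hq2, hq3⟩ := Finset.mem_filter.mp hq
      have := mem_SA.mp hq1
      rw [Qsum_expand] at this
      show q 0 ^ 2 + 2 * q 1 ^ 2 = (k : ℤ)
      rw [← (hq2 : q 1 = q 2), (hq3 : q 3 = 0)] at this
      linarith
  rw [hs, Set.ncard_coe_finset, Finset.card_image_of_injOn]
  intro q hq q' hq' h
  have hm := (Finset.mem_filter.mp (Finset.mem_coe.mp hq)).2
  have hm' := (Finset.mem_filter.mp (Finset.mem_coe.mp hq')).2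
  have e1 : q 1 = q' 1 := congrArg (fun t => t.2) h
  funext i
  fin_cases i
  · exact congrArg (fun t => t.1) h
  · exact e1
  · show q 2 = q' 2
    rw [← hm.1, ← hm'.1, e1]
  · show q 3 = q' 3
    rw [hm.2, hm'.2]

lemma N13_eq (k : ℕ) : N13 k = ((SA k).filter A13).card := by
  rw [N13]
  have hs : {p : ℤ × ℤ | p.1 ^ 2 + 3 * p.2 ^ 2 = (k : ℤ)} =
      ↑(((SA k).filter A13).image fun q => (q 0, q 1)) := by
    ext x
    simp only [Set.mem_setOf_eq, Finset.coe_image, Set.mem_image, Finset.mem_coe]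
    constructor
    · intro h
      refine ⟨![x.1, x.2, x.2, x.2], Finset.mem_filter.mpr ⟨mem_SA.mpr ?_, ?_, ?_⟩, ?_⟩
      · rw [Qsum_expand]
        show x.1 ^ 2 + x.2 ^ 2 + x.2 ^ 2 + x.2 ^ 2 = (k : ℤ)
        linarith
      · show (![x.1, x.2, x.2, x.2] : V) 1 = ![x.1, x.2, x.2, x.2] 2
        simp
      · show (![x.1, x.2, x.2, x.2] : V) 2 = ![x.1, x.2, x.2, x.2] 3
        simp
      · simp
    · rintro ⟨q, hq, rfl⟩
      obtain ⟨hq1, hq2, hq3⟩ := Finset.mem_filter.mp hq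
      have := mem_SA.mp hq1
      rw [Qsum_expand] at this
      show q 0 ^ 2 + 3 * q 1 ^ 2 = (k : ℤ)
      rw [← (hq2 : q 1 = q 2)] at this
      rw [← (hq3 : q 2 = q 3), ← (hq2 : q 1 = q 2)] at this
      linarith
  rw [hs, Set.ncard_coe_finset, Finset.card_image_of_injOn]
  intro q hq q' hq' h
  have hm := (Finset.mem_filter.mp (Finset.mem_coe.mp hq)).2
  have hm' := (Finset.mem_filter.mp (Finset.mem_coe.mp hq')).2
  have e1 : q 1 = q' 1 := congrArg (fun t => t.2) h
  funext i
  fin_cases i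
  · exact congrArg (fun t => t.1) h
  · exact e1
  · show q 2 = q' 2
    rw [← hm.1, ← hm'.1, e1]
  · show q 3 = q' 3
    rw [← hm.2, ← hm'.2, ← hm.1, ← hm'.1, e1]

lemma N2half_eq (k : ℕ) : N2half k = ((SA k).filter A2h).card := by
  have hs2 : ∀ x : ℤ × ℤ, (2 * x.1 ^ 2 + 2 * x.2 ^ 2 = (k:ℤ)) ↔
      (∃ q ∈ (SA k).filter A2h, (q 0, q 2) = x) := by
    intro x
    constructor
    · intro h
      refine ⟨![x.1, x.1, x.2, x.2], Finset.mem_filter.mpr ⟨mem_SA.mpr ?_, ?_, ?_⟩, ?_⟩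
      · rw [Qsum_expand]
        show x.1 ^ 2 + x.1 ^ 2 + x.2 ^ 2 + x.2 ^ 2 = (k : ℤ)
        linarith
      · show (![x.1, x.1, x.2, x.2] : V) 0 = ![x.1, x.1, x.2, x.2] 1
        simp
      · show (![x.1, x.1, x.2, x.2] : V) 2 = ![x.1, x.1, x.2, x.2] 3
        simp
      · simp
    · rintro ⟨q, hq, rfl⟩
      obtain ⟨hq1, hq2, hq3⟩ := Finset.mem_filter.mp hq
      have := mem_SA.mp hq1
      rw [Qsum_expand] at this
      show 2 * q 0 ^ 2 + 2 * q 2 ^ 2 = (k : ℤ)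
      rw [← (hq2 : q 0 = q 1), ← (hq3 : q 2 = q 3)] at this
      linarith
  have hcard : {x : ℤ × ℤ | 2 * x.1 ^ 2 + 2 * x.2 ^ 2 = (k:ℤ)}.ncard = ((SA k).filter A2h).card := by
    have hs : {x : ℤ × ℤ | 2 * x.1 ^ 2 + 2 * x.2 ^ 2 = (k:ℤ)} =
        ↑(((SA k).filter A2h).image fun q => (q 0, q 2)) := by
      ext x
      simp only [Set.mem_setOf_eq, Finset.coe_image, Set.mem_image, Finset.mem_coe]
      exact hs2 x
    rw [hs, Set.ncard_coe_finset, Finset.card_image_of_injOn]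
    intro q hq q' hq' h
    have hm := (Finset.mem_filter.mp (Finset.mem_coe.mp hq)).2
    have hm' := (Finset.mem_filter.mp (Finset.mem_coe.mp hq')).2
    have e0 : q 0 = q' 0 := congrArg (fun t => t.1) h
    have e2 : q 2 = q' 2 := congrArg (fun t => t.2) h
    funext i
    fin_cases i
    · exact e0
    · show q 1 = q' 1
      rw [← hm.1, ← hm'.1, e0]
    · exact e2
    · show q 3 = q' 3
      rw [← hm.2, ← hm'.2, e2]
  rw [N2half]
  by_cases hpar : k % 2 = 0
  · rw [if_pos hpar, N2, ← hcard]
    congr 1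
    ext x
    simp only [Set.mem_setOf_eq]
    have hk2 : ((k / 2 : ℕ) : ℤ) * 2 = (k : ℤ) := by
      have : k / 2 * 2 = k := Nat.div_mul_cancel (Nat.dvd_of_mod_eq_zero hpar)
      exact_mod_cast this
    constructor
    · intro h; linarith
    · intro h; linarith
  · rw [if_neg hpar, ← hcard]
    have : {x : ℤ × ℤ | 2 * x.1 ^ 2 + 2 * x.2 ^ 2 = (k:ℤ)} = ∅ := by
      ext x
      simp only [Set.mem_setOf_eq, Set.mem_empty_iff_false, iff_false]
      intro h
      have h2 : (2:ℤ) ∣ (k:ℤ) := ⟨x.1^2 + x.2^2, by linarith⟩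
      have h3 : (2:ℕ) ∣ k := by exact_mod_cast h2
      omega
    rw [this]
    simp


lemma strictmono_id_fin4 : ∀ f : Fin 4 → Fin 4, (∀ a b : Fin 4, a < b → f a < f b) → f = id := by
  decide

noncomputable def TF (k : ℕ) : Finset V :=
  (SA k).filter fun q => 0 < q 0 ∧ q 0 < q 1 ∧ q 1 < q 2 ∧ q 2 < q 3

lemma TF_pos {k : ℕ} {t : V} (ht : t ∈ TF k) : ∀ i, 0 < t i := by
  obtain ⟨-, h0, h1, h2, h3⟩ := Finset.mem_filter.mp ht
  intro i
  fin_cases i <;> simp <;> linarith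

lemma TF_strictMono {k : ℕ} {t : V} (ht : t ∈ TF k) : StrictMono t := by
  obtain ⟨-, h0, h1, h2, h3⟩ := Finset.mem_filter.mp ht
  intro i j hij
  fin_cases i <;> fin_cases j <;> simp_all <;> omega

lemma L4_eq (k : ℕ) : L4 k = (TF k).card := by
  rw [L4]
  have hs : {q : ℕ × ℕ × ℕ × ℕ | 0 < q.1 ∧ q.1 < q.2.1 ∧ q.2.1 < q.2.2.1 ∧ q.2.2.1 < q.2.2.2 ∧
      q.1 ^ 2 + q.2.1 ^ 2 + q.2.2.1 ^ 2 + q.2.2.2 ^ 2 = k} =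
      ↑((TF k).image fun q => ((q 0).toNat, (q 1).toNat, (q 2).toNat, (q 3).toNat)) := by
    ext x
    simp only [Set.mem_setOf_eq, Finset.coe_image, Set.mem_image, Finset.mem_coe]
    constructor
    · rintro ⟨h1, h2, h3, h4, h5⟩
      refine ⟨![(x.1 : ℤ), (x.2.1 : ℤ), (x.2.2.1 : ℤ), (x.2.2.2 : ℤ)],
        Finset.mem_filter.mpr ⟨mem_SA.mpr ?_, ?_, ?_, ?_, ?_⟩, ?_⟩
      · rw [Qsum_expand]
        show ((x.1:ℤ))^2 + (x.2.1:ℤ)^2 + (x.2.2.1:ℤ)^2 + (x.2.2.2:ℤ)^2 = (k:ℤ)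
        exact_mod_cast congrArg (Nat.cast : ℕ → ℤ) h5
      · show (0:ℤ) < ((x.1:ℕ):ℤ); exact_mod_cast h1
      · show ((x.1:ℕ):ℤ) < ((x.2.1:ℕ):ℤ); exact_mod_cast h2
      · show ((x.2.1:ℕ):ℤ) < ((x.2.2.1:ℕ):ℤ); exact_mod_cast h3
      · show ((x.2.2.1:ℕ):ℤ) < ((x.2.2.2:ℕ):ℤ); exact_mod_cast h4
      · simp
    · rintro ⟨q, hq, rfl⟩
      obtain ⟨hq1, h0, h1, h2, h3⟩ := Finset.mem_filter.mp hq
      have hsum := mem_SA.mp hq1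
      rw [Qsum_expand] at hsum
      refine ⟨?_, ?_, ?_, ?_, ?_⟩
      · show 0 < (q 0).toNat; omega
      · show (q 0).toNat < (q 1).toNat; omega
      · show (q 1).toNat < (q 2).toNat; omega
      · show (q 2).toNat < (q 3).toNat; omega
      have e0 : ((q 0).toNat : ℤ) = q 0 := Int.toNat_of_nonneg (by omega)
      have e1 : ((q 1).toNat : ℤ) = q 1 := Int.toNat_of_nonneg (by omega)
      have e2 : ((q 2).toNat : ℤ) = q 2 := Int.toNat_of_nonneg (by omega)
      have e3 : ((q 3).toNat : ℤ) = q 3 := Int.toNat_of_nonneg (by omega)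
      have : (((q 0).toNat ^ 2 + (q 1).toNat ^ 2 + (q 2).toNat ^ 2 + (q 3).toNat ^ 2 : ℕ) : ℤ)
          = (k : ℤ) := by
        push_cast
        rw [e0, e1, e2, e3]
        exact hsum
      exact_mod_cast this
  rw [hs, Set.ncard_coe_finset, Finset.card_image_of_injOn]
  intro q hq q' hq' h
  have hp := TF_pos (Finset.mem_coe.mp hq)
  have hp' := TF_pos (Finset.mem_coe.mp hq')
  have c0 : (q 0).toNat = (q' 0).toNat := congrArg (fun t => t.1) h
  have c1 : (q 1).toNat = (q' 1).toNat := congrArg (fun t => t.2.1) h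
  have c2 : (q 2).toNat = (q' 2).toNat := congrArg (fun t => t.2.2.1) h
  have c3 : (q 3).toNat = (q' 3).toNat := congrArg (fun t => t.2.2.2) h
  funext i
  fin_cases i
  · show q 0 = q' 0
    have := hp 0; have := hp' 0; omega
  · show q 1 = q' 1
    have := hp 1; have := hp' 1; omega
  · show q 2 = q' 2
    have := hp 2; have := hp' 2; omega
  · show q 3 = q' 3
    have := hp 3; have := hp' 3; omega

lemma D_card (k : ℕ) : ((SA k).filter Dp).card = 384 * L4 k := by
  rw [L4_eq]
  have : (Wfin ×ˢ TF k).card = ((SA k).filter Dp).card := by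
    refine Finset.card_bij (fun gt _ => act gt.1 gt.2) ?_ ?_ ?_
    · rintro ⟨g, t⟩ hgt
      obtain ⟨hg, ht⟩ := Finset.mem_product.mp hgt
      have hb := mem_Wfin.mp hg
      have htS := (Finset.mem_filter.mp ht).1
      refine Finset.mem_filter.mpr ⟨mem_SA.mpr (by rw [Qsum_act hb]; exact mem_SA.mp htS), ?_⟩
      rw [Dp_act t hb]
      constructor
      · unfold zc
        rw [Finset.card_eq_zero, Finset.filter_eq_empty_iff]
        intro i _
        exact (TF_pos ht i).ne'
      · intro i j hij
        rw [abs_of_pos (TF_pos ht i), abs_of_pos (TF_pos ht j)]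
        exact fun hc => hij ((TF_strictMono ht).injective hc)
    · rintro ⟨g, t⟩ hgt ⟨g', t'⟩ hgt' he
      obtain ⟨hg, ht⟩ := Finset.mem_product.mp (Finset.mem_coe.mp hgt)
      obtain ⟨hg', ht'⟩ := Finset.mem_product.mp (Finset.mem_coe.mp hgt')
      replace hg : g ∈ Wfin := hg
      replace ht : t ∈ TF k := ht
      replace hg' : g' ∈ Wfin := hg'
      replace ht' : t' ∈ TF k := ht'
      have hb := mem_Wfin.mp hg
      have hb' := mem_Wfin.mp hg'
      replace he : act g t = act g' t' := he
      have habs : ∀ i, t (g.2 i) = t' (g'.2 i) := by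
        intro i
        have h1 := congrArg (fun f => |f i|) he
        simp only [abs_act] at h1
        rwa [abs_of_pos (TF_pos ht _), abs_of_pos (TF_pos ht' _)] at h1
      set e := Equiv.ofBijective g.2 hb with hedef
      have htt : t = t' ∘ (g'.2 ∘ ⇑e.symm) := by
        funext j
        have := habs (e.symm j)
        have he2 : g.2 (e.symm j) = j := e.apply_symm_apply j
        rw [he2] at this
        exact this
      have hsm : ∀ a b : Fin 4, a < b → (g'.2 ∘ ⇑e.symm) a < (g'.2 ∘ ⇑e.symm) b := by
        intro a b hab
        have h1 : t a < t b := TF_strictMono ht hab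
        rw [htt] at h1
        exact (TF_strictMono ht').lt_iff_lt.mp h1
      have hid : (g'.2 ∘ ⇑e.symm) = id := strictmono_id_fin4 _ hsm
      have htt' : t = t' := by rw [htt, hid]; rfl
      have hg2 : g.2 = g'.2 := by
        funext i
        apply (TF_strictMono ht).injective
        rw [htt'] at habs ⊢
        exact habs i
      have hg1 : g.1 = g'.1 := by
        funext i
        have h1 := congrFun he i
        simp only [act] at h1
        rw [← htt', ← hg2] at h1
        have hpos := TF_pos ht (g.2 i)
        rcases Bool.eq_false_or_eq_true (g.1 i) with hx | hx <;>
          rcases Bool.eq_false_or_eq_true (g'.1 i) with hy | hy <;>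
          rw [hx, hy] <;> rw [hx, hy] at h1 <;> simp at h1 <;> omega
      rw [Prod.ext_iff, Prod.ext_iff]
      exact ⟨⟨hg1, hg2⟩, htt'⟩
    · intro p hp
      obtain ⟨hpS, hpD⟩ := Finset.mem_filter.mp hp
      obtain ⟨hz, habs⟩ := hpD
      have hnz : ∀ i, p i ≠ 0 := by
        intro i
        have : (Finset.univ.filter fun l => p l = 0) = ∅ := Finset.card_eq_zero.mp hz
        intro hc
        have : i ∈ Finset.univ.filter fun l => p l = 0 := by simp [hc]
        simp_all
      set σ := Tuple.sort (fun i => |p i|) with hσ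
      set t : V := fun i => |p (σ i)| with htdef
      have hmono : Monotone ((fun i => |p i|) ∘ σ) := Tuple.monotone_sort _
      have hinj : Function.Injective t := by
        intro a b hab
        have h1 : |p (σ a)| = |p (σ b)| := hab
        have h2 : σ a = σ b := by
          by_contra hc
          exact habs (σ a) (σ b) hc h1
        exact σ.injective h2
      have hsm : StrictMono t := Monotone.strictMono_of_injective hmono hinj
      have htpos : 0 < t 0 := abs_pos.mpr (hnz (σ 0))
      refine ⟨((fun i => decide (p i < 0), ⇑σ.symm), t), Finset.mem_product.mpr
        ⟨mem_Wfin.mpr σ.symm.bijective, Finset.mem_filter.mpr ⟨mem_SA.mpr ?_, ?_, ?_, ?_, ?_⟩⟩, ?_⟩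
      · have : Qsum t = Qsum p := by
          unfold Qsum
          calc ∑ i, t i ^ 2 = ∑ i, p (σ i) ^ 2 := by
                refine Finset.sum_congr rfl fun i _ => ?_
                rw [htdef]
                exact sq_abs _
            _ = ∑ i, p i ^ 2 := Equiv.sum_comp σ (fun i => p i ^ 2)
        rw [this]
        exact mem_SA.mp hpS
      · exact htpos
      · exact hsm (show (0 : Fin 4) < 1 by decide)
      · exact hsm (show (1 : Fin 4) < 2 by decide)
      · exact hsm (show (2 : Fin 4) < 3 by decide)
      · funext i
        simp only [act]
        have he2 : σ (σ.symm i) = i := σ.apply_symm_apply i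
        rw [htdef]
        simp only [he2]
        by_cases hlt : p i < 0
        · simp [hlt, abs_of_neg hlt]
        · simp [hlt, abs_of_nonneg (not_lt.mp hlt)]
  rw [← this, Finset.card_product, card_Wfin]


lemma hst (k : ℕ) (P : V → Prop) [DecidablePred P] :
    ∑ q ∈ SA k, (cnt P q : ℤ) = (((SA k).filter P).card : ℤ) * 384 := by
  have h := star k P
  have h2 : ((∑ q ∈ SA k, cnt P q : ℕ) : ℤ) = ((((SA k).filter P).card * 384 : ℕ) : ℤ) := by
    exact_mod_cast congrArg (Nat.cast : ℕ → ℤ) h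
  rw [Nat.cast_sum] at h2
  push_cast at h2
  exact h2

lemma hindsum (k : ℕ) (P : V → Prop) [DecidablePred P] :
    ∑ q ∈ SA k, ind (P q) = (((SA k).filter P).card : ℤ) := by
  unfold ind
  rw [Finset.sum_boole]

lemma key (k : ℕ) (hk : 0 < k) :
    384 * C k = 384 * (384 * (L4 k : ℤ)) + 2304 * (((SA k).filter P5).card : ℤ)
      + 768 * (((SA k).filter P8).card : ℤ) + 1152 * (((SA k).filter P10).card : ℤ)
      + 5760 * (((SA k).filter P11).card : ℤ) := by
  have hne : ∀ q ∈ SA k, q ≠ 0 := by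
    intro q hq hq0
    rw [hq0] at hq
    have h2 := mem_SA.mp hq
    rw [Qsum_expand] at h2
    simp at h2
    omega
  have hsum : (∑ q ∈ SA k, ((384 : ℤ) - 12 * cnt A112 q - 4 * cnt A3 q + 18 * cnt A2 q
        + 24 * cnt A12 q + 32 * cnt A13 q + 12 * cnt A2h q))
      = ∑ q ∈ SA k, (384 * ind (Dp q) + 2304 * ind (P5 q) + 768 * ind (P8 q)
        + 1152 * ind (P10 q) + 5760 * ind (P11 q)) :=
    Finset.sum_congr rfl (fun q hq => master q (hne q hq))
  have hL : (∑ q ∈ SA k, ((384 : ℤ) - 12 * cnt A112 q - 4 * cnt A3 q + 18 * cnt A2 q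
        + 24 * cnt A12 q + 32 * cnt A13 q + 12 * cnt A2h q))
      = 384 * ((SA k).card : ℤ) - 12 * ((((SA k).filter A112).card : ℤ) * 384)
        - 4 * ((((SA k).filter A3).card : ℤ) * 384) + 18 * ((((SA k).filter A2).card : ℤ) * 384)
        + 24 * ((((SA k).filter A12).card : ℤ) * 384) + 32 * ((((SA k).filter A13).card : ℤ) * 384)
        + 12 * ((((SA k).filter A2h).card : ℤ) * 384) := by
    simp only [Finset.sum_add_distrib, Finset.sum_sub_distrib, Finset.sum_const, nsmul_eq_mul,
      ← Finset.mul_sum]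
    rw [hst k A112, hst k A3, hst k A2, hst k A12, hst k A13, hst k A2h]
    push_cast
    ring
  have hR : (∑ q ∈ SA k, (384 * ind (Dp q) + 2304 * ind (P5 q) + 768 * ind (P8 q)
        + 1152 * ind (P10 q) + 5760 * ind (P11 q)))
      = 384 * (((SA k).filter Dp).card : ℤ) + 2304 * (((SA k).filter P5).card : ℤ)
        + 768 * (((SA k).filter P8).card : ℤ) + 1152 * (((SA k).filter P10).card : ℤ)
        + 5760 * (((SA k).filter P11).card : ℤ) := by
    simp only [Finset.sum_add_distrib, ← Finset.mul_sum]
    rw [hindsum k Dp, hindsum k P5, hindsum k P8, hindsum k P10, hindsum k P11]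
  rw [hL, hR] at hsum
  have hD : (((SA k).filter Dp).card : ℤ) = 384 * (L4 k : ℤ) := by
    exact_mod_cast congrArg (Nat.cast : ℕ → ℤ) (D_card k)
  rw [hD] at hsum
  rw [C, N4_eq, N112_eq, N3_eq, N2_eq, N12_eq, N13_eq, N2half_eq]
  push_cast
  push_cast at hsum
  linarith

lemma prime2 : Nat.Prime 2 := Nat.prime_two
lemma prime3 : Nat.Prime 3 := Nat.prime_three

theorem stmt13 (k : ℕ) (hk : 0 < k) :
    ((∃ m : ℕ, 0 < m ∧ Odd m ∧ k = m ^ 2) → (384 * L4 k : ℤ) = C k - 120) ∧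
    ((∃ m : ℕ, 0 < m ∧ k = 2 * m ^ 2) → (384 * L4 k : ℤ) = C k - 72) ∧
    ((∃ m : ℕ, 0 < m ∧ k = 3 * m ^ 2) → (384 * L4 k : ℤ) = C k - 64) ∧
    ((∃ m : ℕ, 0 < m ∧ k = 4 * m ^ 2) → (384 * L4 k : ℤ) = C k - 216) := by
  refine ⟨?_, ?_, ?_, ?_⟩
  · rintro ⟨m, hm, hodd, rfl⟩
    have hkey := key (m ^ 2) (by positivity)
    have h5 : ((SA (m ^ 2)).filter P5).card = 0 := by
      apply z5
      intro c hc
      have h1 : (2 * c) ^ 2 = m ^ 2 := by ring_nf; ring_nf at hc; omega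
      have h2 : 2 * c = m := Nat.pow_left_injective (by norm_num) h1
      obtain ⟨t, ht⟩ := hodd
      omega
    have h8 : ((SA (m ^ 2)).filter P8).card = 0 := by
      apply z8
      intro c hc
      exact nt prime3 1 c m (by norm_num) hm (by omega)
    have h10 : ((SA (m ^ 2)).filter P10).card = 0 := by
      apply z10
      intro c hc
      exact nt prime2 1 c m (by norm_num) hm (by omega)
    have h11 : ((SA (m ^ 2)).filter P11).card = 8 := c11count hm
    rw [h5, h8, h10, h11] at hkey
    push_cast at hkey
    linarith
  · rintro ⟨m, hm, rfl⟩
    have hkey := key (2 * m ^ 2) (by positivity)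
    have h5 : ((SA (2 * m ^ 2)).filter P5).card = 0 := by
      apply z5
      intro c hc
      exact nt prime2 1 c m (by norm_num) hm (by omega)
    have h8 : ((SA (2 * m ^ 2)).filter P8).card = 0 := by
      apply z8
      intro c hc
      exact nt prime3 2 c m (by norm_num) hm (by omega)
    have h11 : ((SA (2 * m ^ 2)).filter P11).card = 0 := by
      apply z11
      intro c hc
      have hc0 : 0 < c := by
        rcases Nat.eq_zero_or_pos c with h | h
        · subst h
          have : 0 < m ^ 2 := by positivity
          omega
        · exact h
      exact nt prime2 1 m c (by norm_num) hc0 (by omega)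
    have h10 : ((SA (2 * m ^ 2)).filter P10).card = 24 := c10count hm
    rw [h5, h8, h10, h11] at hkey
    push_cast at hkey
    linarith
  · rintro ⟨m, hm, rfl⟩
    have hkey := key (3 * m ^ 2) (by positivity)
    have h5 : ((SA (3 * m ^ 2)).filter P5).card = 0 := by
      apply z5
      intro c hc
      have hc0 : 0 < c := by
        rcases Nat.eq_zero_or_pos c with h | h
        · subst h
          have : 0 < m ^ 2 := by positivity
          omega
        · exact h
      exact nt prime3 4 m c (by norm_num) hc0 (by omega)
    have h10 : ((SA (3 * m ^ 2)).filter P10).card = 0 := by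
      apply z10
      intro c hc
      exact nt prime2 3 c m (by norm_num) hm (by omega)
    have h11 : ((SA (3 * m ^ 2)).filter P11).card = 0 := by
      apply z11
      intro c hc
      have hc0 : 0 < c := by
        rcases Nat.eq_zero_or_pos c with h | h
        · subst h
          have : 0 < m ^ 2 := by positivity
          omega
        · exact h
      exact nt prime3 1 m c (by norm_num) hc0 (by omega)
    have h8 : ((SA (3 * m ^ 2)).filter P8).card = 32 := c8count hm
    rw [h5, h8, h10, h11] at hkey
    push_cast at hkey
    linarith
  · rintro ⟨m, hm, rfl⟩
    have hkey := key (4 * m ^ 2) (by positivity)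
    have h8 : ((SA (4 * m ^ 2)).filter P8).card = 0 := by
      apply z8
      intro c hc
      exact nt prime3 4 c m (by norm_num) hm (by omega)
    have h10 : ((SA (4 * m ^ 2)).filter P10).card = 0 := by
      apply z10
      intro c hc
      have hc0 : 0 < c := by
        rcases Nat.eq_zero_or_pos c with h | h
        · subst h
          have : 0 < m ^ 2 := by positivity
          omega
        · exact h
      exact nt prime2 1 m c (by norm_num) hc0 (by omega)
    have h5 : ((SA (4 * m ^ 2)).filter P5).card = 16 := c5count hm
    have h11 : ((SA (4 * m ^ 2)).filter P11).card = 8 := by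
      have h2 : (2 * m) ^ 2 = 4 * m ^ 2 := by ring
      have := c11count (m := 2 * m) (by omega)
      rwa [h2] at this
    rw [h5, h8, h10, h11] at hkey
    push_cast at hkey
    linarith
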